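/- arXiv:1204.3132 — 5 statements merged into one kernel-verified Lean document; each statement's English description precedes it below -/
import Mathlib

section
/- Define the observed-data posterior-draw variance estimator σ̂²_PD = σ²·U_obs/U_PD. If ν_PD > 2 then E[σ̂²_PD] − σ² = σ²·(2 − ν_prior)/(n_obs + ν_prior − 3). If moreover ν_PD > 4 then Var(σ̂²_PD) = 2σ⁴·(n_obs − 1)·(2n_obs + ν_prior − 4)/((n_obs + ν_prior − 5)·(n_obs + ν_prior − 3)²). -/
open MeasureTheory ProbabilityTheory NNReal

section GammaMomentAux

open MeasureTheory Real Set ProbabilityTheory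
open scoped ENNReal NNReal

lemma gamma_ae_pos {a r : ℝ} : ∀ᵐ x ∂(gammaMeasure a r), 0 < x := by
  rw [ae_iff]
  have hset : {x : ℝ | ¬ 0 < x} = Iic 0 := by ext x; simp [not_lt]
  rw [hset, gammaMeasure, withDensity_apply _ measurableSet_Iic,
    ← setLIntegral_congr Iio_ae_eq_Iic]
  exact lintegral_gammaPDF_of_nonpos le_rfl

lemma integrableOn_rpow_mul_exp_neg_mul {c r : ℝ} (hc : 0 < c) (hr : 0 < r) :
    IntegrableOn (fun x : ℝ => x ^ (c - 1) * exp (-(r * x))) (Ioi 0) := by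
  have h0 := Real.GammaIntegral_convergent hc
  rw [show (0:ℝ) = r * 0 by ring] at h0
  have h1 : IntegrableOn (fun x : ℝ => exp (-(r * x)) * (r * x) ^ (c - 1)) (Ioi 0) :=
    (integrableOn_Ioi_comp_mul_left_iff (fun x : ℝ => exp (-x) * x ^ (c - 1)) 0 hr).mpr h0
  have h2 : IntegrableOn (fun x : ℝ => (r ^ (c-1))⁻¹ * (exp (-(r * x)) * (r * x) ^ (c - 1)))
      (Ioi 0) := h1.const_mul _
  apply h2.congr_fun ?_ measurableSet_Ioi
  intro x hx
  simp only
  rw [Real.mul_rpow hr.le (le_of_lt hx)]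
  field_simp [(Real.rpow_pos_of_pos hr _).ne']

lemma gamma_moment {a r p : ℝ} (ha : 0 < a) (hr : 0 < r) (hap : 0 < a + p) :
    Integrable (fun x : ℝ => if 0 < x then x ^ p else 0) (gammaMeasure a r) ∧
    ∫ x, (if 0 < x then x ^ p else 0) ∂(gammaMeasure a r)
      = Gamma (a + p) / (Gamma a * r ^ p) := by
  set g : ℝ → ℝ := fun x => if 0 < x then x ^ p else 0 with hgdef
  set F : ℝ → ℝ := fun x => gammaPDFReal a r x * g x with hFdef
  have hd : gammaMeasure a r
      = volume.withDensity (fun x => ((gammaPDFReal a r x).toNNReal : ℝ≥0∞)) := rfl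
  have hmeasNN : Measurable fun x => (gammaPDFReal a r x).toNNReal :=
    (measurable_gammaPDFReal a r).real_toNNReal
  have hsmul : ∀ x, (gammaPDFReal a r x).toNNReal • g x = F x := fun x => by
    simp [NNReal.smul_def, Real.coe_toNNReal _ (gammaPDFReal_nonneg ha hr x), hFdef]
  have hFIoi : IntegrableOn F (Ioi 0) := by
    apply IntegrableOn.congr_fun
      ((integrableOn_rpow_mul_exp_neg_mul hap hr).const_mul (r ^ a / Gamma a))
      ?_ measurableSet_Ioi
    intro x hx
    have hx : (0:ℝ) < x := hx
    simp only [hFdef, hgdef, gammaPDFReal, if_pos hx.le, if_pos hx]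
    rw [show a + p - 1 = (a - 1) + p by ring, Real.rpow_add hx]
    ring
  have hFIic : IntegrableOn F (Iic 0) := by
    apply IntegrableOn.congr_fun integrableOn_zero ?_ measurableSet_Iic
    intro x hx
    have hx : x ≤ 0 := hx
    simp [hFdef, hgdef, not_lt.mpr hx]
  have hF : Integrable F := by
    have := integrableOn_union.mpr ⟨hFIic, hFIoi⟩
    rwa [Iic_union_Ioi, integrableOn_univ] at this
  have hFval : ∫ x, F x = Gamma (a + p) / (Gamma a * r ^ p) := by
    rw [← integral_add_compl measurableSet_Iic hF, compl_Iic]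
    have h1 : ∫ x in Iic (0:ℝ), F x = 0 := by
      rw [setIntegral_congr_fun measurableSet_Iic
        (fun x (hx : x ≤ 0) => by simp [hFdef, hgdef, not_lt.mpr hx] : Set.EqOn F 0 (Iic 0))]
      simp
    have h2 : ∫ x in Ioi (0:ℝ), F x
        = r ^ a / Gamma a * ((1 / r) ^ (a + p) * Gamma (a + p)) := by
      rw [setIntegral_congr_fun measurableSet_Ioi
        (fun x (hx : (0:ℝ) < x) => by
          simp only [hFdef, hgdef, gammaPDFReal, if_pos hx.le, if_pos hx]
          rw [show a + p - 1 = (a - 1) + p by ring, Real.rpow_add hx]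
          ring
          : Set.EqOn F (fun x => r ^ a / Gamma a * (x ^ (a + p - 1) * exp (-(r * x)))) (Ioi 0))]
      rw [integral_const_mul, integral_rpow_mul_exp_neg_mul_Ioi hap hr]
    rw [h1, h2, zero_add, Real.div_rpow zero_le_one hr.le, Real.one_rpow, Real.rpow_add hr]
    field_simp [(Real.Gamma_pos_of_pos ha).ne', (Real.rpow_pos_of_pos hr a).ne',
      (Real.rpow_pos_of_pos hr p).ne']
  constructor
  · rw [hd, integrable_withDensity_iff_integrable_smul hmeasNN]
    exact hF.congr (ae_of_all _ fun x => (hsmul x).symm)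
  · rw [hd, integral_withDensity_eq_integral_smul hmeasNN,
      integral_congr_ae (ae_of_all _ hsmul), hFval]

lemma gamma_moment' {a r p : ℝ} (ha : 0 < a) (hr : 0 < r) (hap : 0 < a + p)
    {φ : ℝ → ℝ} (hφm : Measurable φ) (hφ : ∀ x : ℝ, 0 < x → φ x = x ^ p) :
    Integrable φ (gammaMeasure a r) ∧
    ∫ x, φ x ∂(gammaMeasure a r) = Gamma (a + p) / (Gamma a * r ^ p) := by
  have hae : φ =ᵐ[gammaMeasure a r] (fun x => if 0 < x then x ^ p else 0) :=
    gamma_ae_pos.mono fun x hx => by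
      show φ x = if 0 < x then x ^ p else 0
      rw [if_pos hx, hφ x hx]
  obtain ⟨hint, hval⟩ := gamma_moment ha hr hap
  exact ⟨hint.congr hae.symm, by rw [integral_congr_ae hae, hval]⟩

lemma gamma_mean {a r : ℝ} (ha : 0 < a) (hr : 0 < r) :
    Integrable (fun x : ℝ => x) (gammaMeasure a r) ∧
    ∫ x, x ∂(gammaMeasure a r) = a / r := by
  have h := gamma_moment' (a := a) (p := 1) ha hr (by linarith) measurable_id
    (fun x hx => (Real.rpow_one x).symm)
  refine ⟨h.1, h.2.trans ?_⟩
  rw [Real.Gamma_add_one ha.ne', Real.rpow_one]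
  field_simp [(Real.Gamma_pos_of_pos ha).ne']

lemma gamma_sq {a r : ℝ} (ha : 0 < a) (hr : 0 < r) :
    Integrable (fun x : ℝ => x ^ 2) (gammaMeasure a r) ∧
    ∫ x, x ^ 2 ∂(gammaMeasure a r) = a * (a + 1) / r ^ 2 := by
  have h := gamma_moment' (a := a) (p := 2) ha hr (by linarith) (measurable_id'.pow_const 2)
    (fun x hx => by rw [show ((2:ℝ)) = ((2:ℕ):ℝ) by norm_num, Real.rpow_natCast])
  refine ⟨h.1, h.2.trans ?_⟩
  rw [show a + 2 = (a + 1) + 1 by ring, Real.Gamma_add_one (by linarith : a + 1 ≠ 0),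
    Real.Gamma_add_one ha.ne', show ((2:ℝ)) = ((2:ℕ):ℝ) by norm_num, Real.rpow_natCast]
  field_simp [(Real.Gamma_pos_of_pos ha).ne']

lemma gamma_inv {a r : ℝ} (ha : 1 < a) (hr : 0 < r) :
    Integrable (fun x : ℝ => x⁻¹) (gammaMeasure a r) ∧
    ∫ x, x⁻¹ ∂(gammaMeasure a r) = r / (a - 1) := by
  have h := gamma_moment' (a := a) (p := -1) (by linarith) hr (by linarith) measurable_inv
    (fun x hx => (Real.rpow_neg_one x).symm)
  refine ⟨h.1, h.2.trans ?_⟩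
  have h1 : a - 1 ≠ 0 := sub_ne_zero.mpr (by linarith)
  have hg : Gamma a = (a - 1) * Gamma (a - 1) := by
    rw [show a = (a - 1) + 1 by ring, Real.Gamma_add_one h1]; ring_nf
  rw [show a + -1 = a - 1 by ring, Real.rpow_neg_one, hg]
  have hG : Gamma (a - 1) ≠ 0 := (Real.Gamma_pos_of_pos (by linarith)).ne'
  field_simp

lemma gamma_inv_sq {a r : ℝ} (ha : 2 < a) (hr : 0 < r) :
    Integrable (fun x : ℝ => (x ^ 2)⁻¹) (gammaMeasure a r) ∧
    ∫ x, (x ^ 2)⁻¹ ∂(gammaMeasure a r) = r ^ 2 / ((a - 1) * (a - 2)) := by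
  have h := gamma_moment' (a := a) (p := -2) (by linarith) hr (by linarith)
    ((measurable_id'.pow_const 2).inv)
    (fun x hx => by
      rw [Real.rpow_neg hx.le, show ((2:ℝ)) = ((2:ℕ):ℝ) by norm_num, Real.rpow_natCast]; rfl)
  refine ⟨h.1, h.2.trans ?_⟩
  have h1 : a - 1 ≠ 0 := sub_ne_zero.mpr (by linarith)
  have h2 : a - 2 ≠ 0 := sub_ne_zero.mpr (by linarith)
  have hg : Gamma a = (a - 1) * ((a - 2) * Gamma (a - 2)) := by
    rw [show a = (a - 2) + 1 + 1 by ring, Real.Gamma_add_one (by rw [show a - 2 + 1 = a - 1 by ring]; exact h1),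
      Real.Gamma_add_one h2]
    ring_nf
  rw [show a + -2 = a - 2 by ring, hg,
    show ((-2:ℝ)) = -((2:ℕ):ℝ) by norm_num, Real.rpow_neg hr.le, Real.rpow_natCast]
  have hG : Gamma (a - 2) ≠ 0 := (Real.Gamma_pos_of_pos (by linarith)).ne'
  field_simp

end GammaMomentAux

open Real in
/-- bias and variance of the observed-data posterior-draw variance
estimator `σ̂²_PD = σ² · U_obs / U_PD`. -/
theorem stmt2
    {Ω : Type*} [MeasurableSpace Ω] (P : Measure Ω) [IsProbabilityMeasure P]
    (μ σ : ℝ) (hσ : 0 < σ)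
    (n_obs : ℕ) (hn : 2 ≤ n_obs)
    (ν_prior : ℝ) (hνPD : 0 < (n_obs : ℝ) - 1 + ν_prior)
    (U_obs Z_obs U_PD Z_PD : Ω → ℝ)
    (hUmeas : Measurable U_obs) (hZmeas : Measurable Z_obs)
    (hUPDmeas : Measurable U_PD) (hZPDmeas : Measurable Z_PD)
    (hU : P.map U_obs = gammaMeasure (((n_obs : ℝ) - 1) / 2) (1 / 2))
    (hZ : P.map Z_obs = gaussianReal 0 (1 / (n_obs : ℝ≥0)))
    (hUPD : P.map U_PD = gammaMeasure (((n_obs : ℝ) - 1 + ν_prior) / 2) (1 / 2))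
    (hZPD : P.map Z_PD = gaussianReal 0 (1 / (n_obs : ℝ≥0)))
    (hindep : iIndepFun ![U_obs, Z_obs, U_PD, Z_PD] P) :
    ((n_obs : ℝ) - 1 + ν_prior > 2 →
      (∫ ω, σ ^ 2 * U_obs ω / U_PD ω ∂P) - σ ^ 2
        = σ ^ 2 * (2 - ν_prior) / ((n_obs : ℝ) + ν_prior - 3))
    ∧ ((n_obs : ℝ) - 1 + ν_prior > 4 →
      variance (fun ω => σ ^ 2 * U_obs ω / U_PD ω) P
        = 2 * σ ^ 4 * ((n_obs : ℝ) - 1) * (2 * (n_obs : ℝ) + ν_prior - 4)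
            / (((n_obs : ℝ) + ν_prior - 5) * ((n_obs : ℝ) + ν_prior - 3) ^ 2)) := by
  have hn' : (2:ℝ) ≤ (n_obs : ℝ) := by exact_mod_cast hn
  set νo : ℝ := (n_obs : ℝ) - 1 with hνo_def
  set νP : ℝ := (n_obs : ℝ) - 1 + ν_prior with hνP_def
  have hνo : 0 < νo := by simp only [hνo_def]; linarith
  clear_value νo νP
  have hn_eq : (n_obs : ℝ) = νo + 1 := by rw [hνo_def]; ring
  have hvp : ν_prior = νP - νo := by rw [hνP_def, hνo_def]; ring
  have key : ∀ (U : Ω → ℝ), Measurable U → ∀ (m : Measure ℝ), P.map U = m →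
      ∀ (g : ℝ → ℝ), Measurable g → Integrable g m →
      Integrable (fun ω => g (U ω)) P ∧ (∫ ω, g (U ω) ∂P) = ∫ x, g x ∂m := by
    intro U hUm m hm g hg hgint
    constructor
    · rw [← hm] at hgint
      exact (integrable_map_measure hg.aestronglyMeasurable hUm.aemeasurable).mp hgint
    · rw [← hm, integral_map hUm.aemeasurable hg.aestronglyMeasurable]
  have hr2 : (0:ℝ) < 1 / 2 := by norm_num
  have hao : 0 < νo / 2 := by linarith
  -- moments of U_obs
  have hm1 := gamma_mean hao hr2
  have hm2 := gamma_sq hao hr2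
  have M1 := key U_obs hUmeas _ hU _ measurable_id' hm1.1
  have M2 := key U_obs hUmeas _ hU _ (measurable_id'.pow_const 2) hm2.1
  have M1val : (∫ ω, U_obs ω ∂P) = νo := by
    rw [M1.2, hm1.2]; field_simp
  have M2val : (∫ ω, U_obs ω ^ 2 ∂P) = νo * (νo + 2) := by
    rw [M2.2, hm2.2]; field_simp
  -- independence
  have hIndepUU : IndepFun U_obs U_PD P := by
    have := hindep.indepFun (i := 0) (j := 2) (by decide)
    simpa using this
  have hI1 : IndepFun U_obs (fun ω => (U_PD ω)⁻¹) P :=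
    hIndepUU.comp measurable_id measurable_inv
  have hI2 : IndepFun (fun ω => U_obs ω ^ 2) (fun ω => ((U_PD ω) ^ 2)⁻¹) P :=
    hIndepUU.comp (measurable_id'.pow_const 2) ((measurable_id'.pow_const 2).inv)
  -- mean of the estimator, valid whenever νP > 2
  have meanval : νP > 2 → (∫ ω, σ ^ 2 * U_obs ω / U_PD ω ∂P)
      = σ ^ 2 * (νo * (1 / (νP - 2))) := by
    intro h2
    have haP : 1 < νP / 2 := by linarith
    have hi1 := gamma_inv haP hr2
    have I1 := key U_PD hUPDmeas _ hUPD _ measurable_inv hi1.1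
    have I1val : (∫ ω, (U_PD ω)⁻¹ ∂P) = 1 / (νP - 2) := by
      rw [I1.2, hi1.2]
      rw [div_eq_div_iff (by linarith) (by linarith)]
      ring
    simp_rw [div_eq_mul_inv, mul_assoc]
    rw [integral_const_mul,
      hI1.integral_fun_mul_eq_mul_integral hUmeas.aestronglyMeasurable hUPDmeas.inv.aestronglyMeasurable,
      M1val, I1val]
    ring
  constructor
  · intro h2
    rw [meanval h2]
    have hne : νP - 2 ≠ 0 := by intro h; rw [sub_eq_zero] at h; linarith
    have e1 : (n_obs : ℝ) + ν_prior - 3 = νP - 2 := by rw [hνP_def]; ring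
    rw [e1, hvp]
    field_simp [hne]
    ring
  · intro h4
    have h2 : νP > 2 := by linarith
    have haP2 : 2 < νP / 2 := by linarith
    have hi2 := gamma_inv_sq haP2 hr2
    have I2 := key U_PD hUPDmeas _ hUPD _ ((measurable_id'.pow_const 2).inv) hi2.1
    have I2val : (∫ ω, ((U_PD ω) ^ 2)⁻¹ ∂P) = 1 / ((νP - 2) * (νP - 4)) := by
      rw [show (∫ ω, ((U_PD ω) ^ 2)⁻¹ ∂P) = ∫ x, (x ^ 2)⁻¹ ∂(gammaMeasure (νP / 2) (1 / 2)) from I2.2, hi2.2]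
      have ha1 : νP / 2 - 1 ≠ 0 := by intro h; rw [sub_eq_zero] at h; linarith
      have ha2 : νP / 2 - 2 ≠ 0 := by intro h; rw [sub_eq_zero] at h; linarith
      have hb1 : νP - 2 ≠ 0 := by intro h; rw [sub_eq_zero] at h; linarith
      have hb2 : νP - 4 ≠ 0 := by intro h; rw [sub_eq_zero] at h; linarith
      rw [div_eq_div_iff (mul_ne_zero ha1 ha2) (mul_ne_zero hb1 hb2)]
      ring
    set X : Ω → ℝ := fun ω => σ ^ 2 * U_obs ω / U_PD ω with hXdef
    have hXmeas : Measurable X := (hUmeas.const_mul _).div hUPDmeas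
    have hX2eq : ∀ ω, X ω ^ 2 = σ ^ 4 * (U_obs ω ^ 2 * ((U_PD ω) ^ 2)⁻¹) := by
      intro ω
      simp only [hXdef]
      rw [div_pow, mul_pow, div_eq_mul_inv, mul_assoc, ← pow_mul]
    have hX2int : Integrable (fun ω => X ω ^ 2) P := by
      have hprod := hI2.integrable_mul M2.1 I2.1
      have := (hprod.const_mul (σ ^ 4))
      exact this.congr (ae_of_all _ fun ω => (hX2eq ω).symm)
    have hmem : MemLp X 2 P :=
      (memLp_two_iff_integrable_sq hXmeas.aestronglyMeasurable).mpr hX2int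
    have hX2val : (∫ ω, X ω ^ 2 ∂P)
        = σ ^ 4 * (νo * (νo + 2) * (1 / ((νP - 2) * (νP - 4)))) := by
      rw [integral_congr_ae (ae_of_all _ hX2eq), integral_const_mul,
        hI2.integral_fun_mul_eq_mul_integral (hUmeas.pow_const 2).aestronglyMeasurable
          ((hUPDmeas.pow_const 2).inv).aestronglyMeasurable,
        M2val, I2val]
    have hvar := variance_eq_sub hmem
    have hEX : (∫ ω, X ω ∂P) = σ ^ 2 * (νo * (1 / (νP - 2))) := meanval h2
    rw [show variance (fun ω => σ ^ 2 * U_obs ω / U_PD ω) P = variance X P from rfl, hvar]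
    have hgoal1 : P[X ^ 2] = ∫ ω, X ω ^ 2 ∂P := by
      apply integral_congr_ae; filter_upwards with ω; simp
    rw [hgoal1, hX2val, show P[X] = ∫ ω, X ω ∂P from rfl, hEX]
    have hne2 : νP - 2 ≠ 0 := by intro h; rw [sub_eq_zero] at h; linarith
    have hne4 : νP - 4 ≠ 0 := by intro h; rw [sub_eq_zero] at h; linarith
    have e1 : (n_obs : ℝ) + ν_prior - 3 = νP - 2 := by rw [hνP_def]; ring
    have e2 : (n_obs : ℝ) + ν_prior - 5 = νP - 4 := by rw [hνP_def]; ring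
    rw [e1, e2, hn_eq, hvp]
    field_simp [hne2, hne4]
    ring
end

section
/- Define the observed-data posterior-draw standard-deviation estimator σ̂_PD = σ·√(U_obs/U_PD). If ν_PD > 1 then E[σ̂_PD] = σ·Γ(n_obs/2)·Γ((n_obs + ν_prior − 2)/2)/(Γ((n_obs − 1)/2)·Γ((n_obs + ν_prior − 1)/2)). If moreover ν_PD > 2 then Var(σ̂_PD) = σ²·((n_obs − 1)/(n_obs + ν_prior − 3) − Γ(n_obs/2)²·Γ((n_obs + ν_prior − 2)/2)²/(Γ((n_obs − 1)/2)²·Γ((n_obs + ν_prior − 1)/2)²)). -/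
open MeasureTheory ProbabilityTheory NNReal

section Aux
open Real Set
open scoped ENNReal

lemma gamma_moment_aux {a r s : ℝ} (ha : 0 < a) (hr : 0 < r) (has : 0 < a + s) :
    ∫ x, gammaPDFReal a r x * x ^ s = Real.Gamma (a + s) / Real.Gamma a * r ^ (-s) := by
  have h0 : (fun x => gammaPDFReal a r x * x ^ s)
      =ᵐ[volume] (Ioi (0:ℝ)).indicator (fun x => gammaPDFReal a r x * x ^ s) := by
    filter_upwards [compl_mem_ae_iff.mpr (volume_singleton (a := (0:ℝ)))] with x hx
    rcases lt_trichotomy x 0 with h | h | h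
    · simp [indicator, not_lt.mpr h.le, gammaPDFReal, not_le.mpr h]
    · exact absurd h hx
    · simp [indicator, h]
  rw [integral_congr_ae h0, integral_indicator measurableSet_Ioi]
  have : ∀ x ∈ Ioi (0:ℝ), gammaPDFReal a r x * x ^ s
      = (r ^ a / Real.Gamma a) * (x ^ (a + s - 1) * Real.exp (-(r * x))) := by
    intro x hx
    have hx' : (0:ℝ) < x := hx
    rw [gammaPDFReal, if_pos hx'.le]
    rw [show a + s - 1 = (a - 1) + s by ring, Real.rpow_add hx']
    ring
  rw [setIntegral_congr_fun measurableSet_Ioi this, integral_const_mul,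
    integral_rpow_mul_exp_neg_mul_Ioi has hr]
  rw [one_div, Real.inv_rpow hr.le, ← Real.rpow_neg hr.le]
  have hm : r ^ a * r ^ (-s + -a) = r ^ (-s) := by
    rw [← Real.rpow_add hr]; ring_nf
  field_simp
  rw [show -(a + s) = -s + -a by ring, hm]

lemma gamma_moment_integrable_aux {a r s : ℝ} (ha : 0 < a) (hr : 0 < r) (has : 0 < a + s) :
    Integrable (fun x => gammaPDFReal a r x * x ^ s) := by
  have h0 : (fun x => gammaPDFReal a r x * x ^ s)
      =ᵐ[volume] (Ioi (0:ℝ)).indicator (fun x => gammaPDFReal a r x * x ^ s) := by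
    filter_upwards [compl_mem_ae_iff.mpr (volume_singleton (a := (0:ℝ)))] with x hx
    rcases lt_trichotomy x 0 with h | h | h
    · simp [indicator, not_lt.mpr h.le, gammaPDFReal, not_le.mpr h]
    · exact absurd h hx
    · simp [indicator, h]
  rw [integrable_congr h0, integrable_indicator_iff measurableSet_Ioi]
  have hint : IntegrableOn (fun x : ℝ => (r ^ a / Real.Gamma a) *
      (x ^ (a + s - 1) * Real.exp (-(r * x)))) (Ioi 0) := by
    apply Integrable.const_mul
    have := integrableOn_rpow_mul_exp_neg_mul_rpow (s := a + s - 1) (p := 1)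
      (by linarith) one_pos hr
    refine this.congr_fun (fun x hx => ?_) measurableSet_Ioi
    beta_reduce; rw [Real.rpow_one]; ring_nf
  refine hint.congr_fun (fun x hx => ?_) measurableSet_Ioi
  have hx' : (0:ℝ) < x := hx
  beta_reduce
  rw [gammaPDFReal, if_pos hx'.le,
    show a + s - 1 = (a - 1) + s by ring, Real.rpow_add hx']
  ring

lemma gamma_rpow_integrable {a r s : ℝ} (ha : 0 < a) (hr : 0 < r) (has : 0 < a + s) :
    Integrable (fun x => x ^ s) (gammaMeasure a r) := by
  rw [gammaMeasure, show gammaPDF a r = fun x => ENNReal.ofReal (gammaPDFReal a r x) from rfl]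
  rw [integrable_withDensity_iff ((measurable_gammaPDFReal a r).ennreal_ofReal)
    (Filter.Eventually.of_forall fun x => ENNReal.ofReal_lt_top)]
  refine (gamma_moment_integrable_aux ha hr has).congr ?_
  refine Filter.Eventually.of_forall fun x => ?_
  simp only [ENNReal.toReal_ofReal (gammaPDFReal_nonneg ha hr x)]
  ring

lemma gamma_rpow_integral {a r s : ℝ} (ha : 0 < a) (hr : 0 < r) (has : 0 < a + s) :
    ∫ x, x ^ s ∂(gammaMeasure a r) = Real.Gamma (a + s) / Real.Gamma a * r ^ (-s) := by
  have hf : Measurable (fun x => (gammaPDFReal a r x).toNNReal) :=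
    (measurable_gammaPDFReal a r).real_toNNReal
  have heq : gammaMeasure a r
      = volume.withDensity (fun x => ((gammaPDFReal a r x).toNNReal : ℝ≥0∞)) := rfl
  rw [heq, integral_withDensity_eq_integral_smul hf]
  rw [← gamma_moment_aux ha hr has]
  congr 1; ext x
  rw [NNReal.smul_def, smul_eq_mul, Real.coe_toNNReal _ (gammaPDFReal_nonneg ha hr x)]

lemma map_gamma_rpow {Ω : Type*} [MeasurableSpace Ω] {P : Measure Ω} {W : Ω → ℝ}
    (hWm : Measurable W) {c r t : ℝ} (hmap : P.map W = gammaMeasure c r)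
    (hc : 0 < c) (hr : 0 < r) (ht : 0 < c + t) :
    Integrable (fun ω => (W ω) ^ t) P ∧
      ∫ ω, (W ω) ^ t ∂P = Real.Gamma (c + t) / Real.Gamma c * r ^ (-t) := by
  have hfm : Measurable (fun x : ℝ => x ^ t) := by fun_prop
  constructor
  · have := gamma_rpow_integrable (s := t) hc hr ht
    rw [← hmap] at this
    exact (integrable_map_measure hfm.aestronglyMeasurable hWm.aemeasurable).mp this
  · rw [← integral_map hWm.aemeasurable hfm.aestronglyMeasurable, hmap,
      gamma_rpow_integral hc hr ht]

lemma gamma_map_pos {Ω : Type*} [MeasurableSpace Ω] {P : Measure Ω} {W : Ω → ℝ}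
    (hWm : Measurable W) {c r : ℝ} (hmap : P.map W = gammaMeasure c r) :
    ∀ᵐ ω ∂P, 0 < W ω := by
  have h1 : P.map W (Iic 0) = 0 := by
    rw [hmap, gammaMeasure, withDensity_apply _ measurableSet_Iic,
      setLIntegral_congr (Iio_ae_eq_Iic (a := (0:ℝ))).symm,
      lintegral_gammaPDF_of_nonpos le_rfl]
  rw [Measure.map_apply hWm measurableSet_Iic] at h1
  rw [ae_iff]
  convert h1 using 2
  ext ω; simp [not_lt]


end Aux

/-- mean and variance of the observed-data posterior-draw
standard-deviation estimator `σ̂_PD = σ · √(U_obs / U_PD)`. -/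
theorem stmt3
    {Ω : Type*} [MeasurableSpace Ω] (P : Measure Ω) [IsProbabilityMeasure P]
    (μ σ : ℝ) (hσ : 0 < σ)
    (n_obs : ℕ) (hn : 2 ≤ n_obs)
    (ν_prior : ℝ) (hνPD : 0 < (n_obs : ℝ) - 1 + ν_prior)
    (U_obs Z_obs U_PD Z_PD : Ω → ℝ)
    (hUmeas : Measurable U_obs) (hZmeas : Measurable Z_obs)
    (hUPDmeas : Measurable U_PD) (hZPDmeas : Measurable Z_PD)
    (hU : P.map U_obs = gammaMeasure (((n_obs : ℝ) - 1) / 2) (1 / 2))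
    (hZ : P.map Z_obs = gaussianReal 0 (1 / (n_obs : ℝ≥0)))
    (hUPD : P.map U_PD = gammaMeasure (((n_obs : ℝ) - 1 + ν_prior) / 2) (1 / 2))
    (hZPD : P.map Z_PD = gaussianReal 0 (1 / (n_obs : ℝ≥0)))
    (hindep : iIndepFun ![U_obs, Z_obs, U_PD, Z_PD] P) :
    ((n_obs : ℝ) - 1 + ν_prior > 1 →
      (∫ ω, σ * Real.sqrt (U_obs ω / U_PD ω) ∂P)
        = σ * Real.Gamma ((n_obs : ℝ) / 2) * Real.Gamma (((n_obs : ℝ) + ν_prior - 2) / 2)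
            / (Real.Gamma (((n_obs : ℝ) - 1) / 2)
                * Real.Gamma (((n_obs : ℝ) + ν_prior - 1) / 2)))
    ∧ ((n_obs : ℝ) - 1 + ν_prior > 2 →
      variance (fun ω => σ * Real.sqrt (U_obs ω / U_PD ω)) P
        = σ ^ 2 * (((n_obs : ℝ) - 1) / ((n_obs : ℝ) + ν_prior - 3)
            - Real.Gamma ((n_obs : ℝ) / 2) ^ 2
                * Real.Gamma (((n_obs : ℝ) + ν_prior - 2) / 2) ^ 2
                / (Real.Gamma (((n_obs : ℝ) - 1) / 2) ^ 2
                    * Real.Gamma (((n_obs : ℝ) + ν_prior - 1) / 2) ^ 2))) := by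
  have hn2 : (2:ℝ) ≤ (n_obs : ℝ) := by exact_mod_cast hn
  set nr : ℝ := (n_obs : ℝ) with hnr
  have ha : 0 < (nr - 1) / 2 := by linarith
  have hb : 0 < (nr - 1 + ν_prior) / 2 := by linarith
  have hr : 0 < (1/2 : ℝ) := by norm_num
  have hposU : ∀ᵐ ω ∂P, 0 < U_obs ω := gamma_map_pos hUmeas hU
  have hposV : ∀ᵐ ω ∂P, 0 < U_PD ω := gamma_map_pos hUPDmeas hUPD
  have hUV : IndepFun U_obs U_PD P := by
    have := hindep.indepFun (show (0:Fin 4) ≠ 2 by decide)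
    simpa using this
  -- Gamma positivity
  have hΓ3 : 0 < Real.Gamma ((nr - 1) / 2) := Real.Gamma_pos_of_pos ha
  have hΓ4 : 0 < Real.Gamma ((nr + ν_prior - 1) / 2) := by
    apply Real.Gamma_pos_of_pos; linarith
  have part1 : nr - 1 + ν_prior > 1 →
      (∫ ω, σ * Real.sqrt (U_obs ω / U_PD ω) ∂P)
        = σ * Real.Gamma (nr / 2) * Real.Gamma ((nr + ν_prior - 2) / 2)
            / (Real.Gamma ((nr - 1) / 2) * Real.Gamma ((nr + ν_prior - 1) / 2)) := by
    intro h1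
    obtain ⟨hIntU, hEU⟩ := map_gamma_rpow hUmeas hU ha hr
      (show 0 < (nr - 1)/2 + (1/2 : ℝ) by linarith)
    obtain ⟨hIntV, hEV⟩ := map_gamma_rpow hUPDmeas hUPD hb hr
      (show 0 < (nr - 1 + ν_prior)/2 + (-(1/2) : ℝ) by linarith)
    have hae : (fun ω => σ * Real.sqrt (U_obs ω / U_PD ω))
        =ᵐ[P] fun ω => (σ * (U_obs ω) ^ (1/2 : ℝ)) * ((U_PD ω) ^ (-(1/2) : ℝ)) := by
      filter_upwards [hposU, hposV] with ω hu hv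
      have : Real.sqrt (U_obs ω / U_PD ω)
          = (U_obs ω) ^ (1/2 : ℝ) * (U_PD ω) ^ (-(1/2) : ℝ) := by
        rw [Real.sqrt_eq_rpow, Real.div_rpow hu.le hv.le, Real.rpow_neg hv.le,
          div_eq_mul_inv]
      rw [this]; ring
    have hIndep : IndepFun (fun ω => σ * (U_obs ω) ^ (1/2 : ℝ))
        (fun ω => (U_PD ω) ^ (-(1/2) : ℝ)) P :=
      hUV.comp (f := U_obs) (g := U_PD)
        (φ := fun x => σ * x ^ (1/2 : ℝ)) (ψ := fun x => x ^ (-(1/2) : ℝ))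
        (by fun_prop) (by fun_prop)
    have hmul : ∫ a, (σ * U_obs a ^ (1/2:ℝ)) * (U_PD a ^ (-(1/2):ℝ)) ∂P
        = (∫ a, σ * U_obs a ^ (1/2:ℝ) ∂P) * ∫ a, U_PD a ^ (-(1/2):ℝ) ∂P :=
      hIndep.integral_mul_eq_mul_integral (hIntU.const_mul σ).aestronglyMeasurable hIntV.aestronglyMeasurable
    rw [integral_congr_ae hae, hmul, integral_const_mul, hEU, hEV]
    have e1 : (nr - 1)/2 + (1/2 : ℝ) = nr / 2 := by ring
    have e2 : (nr - 1 + ν_prior)/2 + (-(1/2) : ℝ) = (nr + ν_prior - 2) / 2 := by ring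
    have e3 : (nr - 1 + ν_prior)/2 = (nr + ν_prior - 1)/2 := by ring
    rw [e1, e2, e3]
    have hpow : ((1:ℝ)/2) ^ (-(1/2 : ℝ)) * ((1:ℝ)/2) ^ (-(-(1/2) : ℝ)) = 1 := by
      rw [← Real.rpow_add hr]; norm_num
    calc σ * (Real.Gamma (nr/2) / Real.Gamma ((nr-1)/2) * ((1:ℝ)/2) ^ (-(1/2:ℝ)))
          * (Real.Gamma ((nr + ν_prior - 2)/2) / Real.Gamma ((nr + ν_prior - 1)/2)
              * ((1:ℝ)/2) ^ (-(-(1/2):ℝ)))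
        = σ * Real.Gamma (nr/2) * Real.Gamma ((nr + ν_prior - 2)/2)
            / (Real.Gamma ((nr-1)/2) * Real.Gamma ((nr + ν_prior - 1)/2))
            * (((1:ℝ)/2) ^ (-(1/2:ℝ)) * ((1:ℝ)/2) ^ (-(-(1/2):ℝ))) := by ring
      _ = _ := by rw [hpow, mul_one]
  refine ⟨part1, fun h2 => ?_⟩
  obtain ⟨hIntU1, hEU1⟩ := map_gamma_rpow hUmeas hU ha hr
    (show 0 < (nr - 1)/2 + (1 : ℝ) by linarith)
  obtain ⟨hIntV1, hEV1⟩ := map_gamma_rpow hUPDmeas hUPD hb hr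
    (show 0 < (nr - 1 + ν_prior)/2 + (-1 : ℝ) by linarith)
  have hIndep1 : IndepFun (fun ω => σ^2 * (U_obs ω) ^ (1 : ℝ))
      (fun ω => (U_PD ω) ^ (-1 : ℝ)) P :=
    hUV.comp (f := U_obs) (g := U_PD)
      (φ := fun x => σ^2 * x ^ (1 : ℝ)) (ψ := fun x => x ^ (-1 : ℝ))
      (by fun_prop) (by fun_prop)
  have haesq : (fun ω => (σ * Real.sqrt (U_obs ω / U_PD ω)) ^ 2)
      =ᵐ[P] fun ω => (σ^2 * (U_obs ω) ^ (1 : ℝ)) * ((U_PD ω) ^ (-1 : ℝ)) := by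
    filter_upwards [hposU, hposV] with ω hu hv
    have hdiv : (0:ℝ) ≤ U_obs ω / U_PD ω := by positivity
    rw [mul_pow, Real.sq_sqrt hdiv, Real.rpow_one, Real.rpow_neg_one, div_eq_mul_inv]
    ring
  have hXm : AEStronglyMeasurable (fun ω => σ * Real.sqrt (U_obs ω / U_PD ω)) P := by
    apply Measurable.aestronglyMeasurable; fun_prop
  have hmem : MemLp (fun ω => σ * Real.sqrt (U_obs ω / U_PD ω)) 2 P := by
    rw [memLp_two_iff_integrable_sq hXm]
    exact (Integrable.congr (hIndep1.integrable_mul (hIntU1.const_mul _) hIntV1)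
      haesq.symm)
  rw [variance_eq_sub hmem]
  have hEsq : ∫ ω, ((fun ω => σ * Real.sqrt (U_obs ω / U_PD ω)) ^ 2) ω ∂P
      = σ^2 * (nr - 1) / (nr + ν_prior - 3) := by
    have : ∫ ω, ((fun ω => σ * Real.sqrt (U_obs ω / U_PD ω)) ^ 2) ω ∂P
        = ∫ ω, (σ^2 * (U_obs ω) ^ (1 : ℝ)) * ((U_PD ω) ^ (-1 : ℝ)) ∂P := by
      refine integral_congr_ae ?_
      filter_upwards [haesq] with ω h
      simpa using h
    have hmul1 : ∫ a, (σ^2 * U_obs a ^ (1:ℝ)) * (U_PD a ^ (-1:ℝ)) ∂P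
        = (∫ a, σ^2 * U_obs a ^ (1:ℝ) ∂P) * ∫ a, U_PD a ^ (-1:ℝ) ∂P :=
      hIndep1.integral_mul_eq_mul_integral (hIntU1.const_mul _).aestronglyMeasurable hIntV1.aestronglyMeasurable
    rw [this, hmul1, integral_const_mul, hEU1, hEV1]
    have hΓa : Real.Gamma ((nr-1)/2 + 1) = ((nr-1)/2) * Real.Gamma ((nr-1)/2) :=
      Real.Gamma_add_one ha.ne'
    have hbm1 : 0 < (nr - 1 + ν_prior)/2 + (-1:ℝ) := by linarith
    have hΓb : Real.Gamma ((nr - 1 + ν_prior)/2)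
        = ((nr - 1 + ν_prior)/2 + (-1:ℝ)) * Real.Gamma ((nr - 1 + ν_prior)/2 + (-1:ℝ)) := by
      have h := Real.Gamma_add_one hbm1.ne'
      rwa [show (nr - 1 + ν_prior)/2 + (-1:ℝ) + 1 = (nr - 1 + ν_prior)/2 by ring] at h
    have hΓa0 : Real.Gamma ((nr-1)/2) ≠ 0 := hΓ3.ne'
    have hΓb0 : Real.Gamma ((nr - 1 + ν_prior)/2 + (-1:ℝ)) ≠ 0 :=
      (Real.Gamma_pos_of_pos hbm1).ne'
    have hbne : (nr - 1 + ν_prior)/2 + (-1:ℝ) ≠ 0 := hbm1.ne'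
    have e4 : Real.Gamma ((nr-1)/2 + 1) / Real.Gamma ((nr-1)/2) = (nr-1)/2 := by
      rw [hΓa]; field_simp
    have e5 : Real.Gamma ((nr-1+ν_prior)/2 + (-1:ℝ)) / Real.Gamma ((nr-1+ν_prior)/2)
        = ((nr-1+ν_prior)/2 + (-1:ℝ))⁻¹ := by
      rw [hΓb, mul_comm, ← div_div, div_self hΓb0, one_div]
    have h2' : ((1:ℝ)/2 : ℝ) ^ (-(1:ℝ)) = 2 := by
      rw [Real.rpow_neg_one]; norm_num
    have h2'' : ((1:ℝ)/2 : ℝ) ^ (-(-1:ℝ)) = 1/2 := by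
      rw [neg_neg, Real.rpow_one]
    rw [e4, e5, h2', h2'',
      show ((nr-1+ν_prior)/2 + (-1:ℝ)) = (nr+ν_prior-3)/2 by ring]
    have h3 : nr + ν_prior - 3 ≠ 0 := by linarith
    field_simp
  rw [hEsq, part1 (by linarith)]
  have h3 : nr + ν_prior - 3 ≠ 0 := by linarith
  field_simp
end

section
/- Let c be a real constant with ν_obs + c > 0 and define the single-imputation mean estimator under ML imputation μ̂_SI,M = μ + σ·(Z̄_obs + (n_mis/n)·√(U_obs/(ν_obs + c))·Z̄_imp). Then E[μ̂_SI,M] = μ and Var(μ̂_SI,M) = σ²·(1/n_obs + n_mis·(n_obs − 1)/(n²·(n_obs + c − 1))). -/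
open MeasureTheory ProbabilityTheory NNReal

open ENNReal Real Set

lemma bridge {f : ℝ → ℝ} (hf : Measurable f) (hf0 : ∀ x, 0 ≤ f x) (g : ℝ → ℝ) :
    ∫ x, g x ∂(volume.withDensity fun x => ENNReal.ofReal (f x)) = ∫ x, f x * g x := by
  have h : (fun x => ENNReal.ofReal (f x))
      = (fun x : ℝ => (((f x).toNNReal : ℝ≥0) : ℝ≥0∞)) := rfl
  rw [h, integral_withDensity_eq_integral_smul hf.real_toNNReal]
  congr 1
  funext x
  simp [NNReal.smul_def, Real.coe_toNNReal _ (hf0 x)]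

lemma bridge_int {f : ℝ → ℝ} (hf : Measurable f) (hf0 : ∀ x, 0 ≤ f x) (g : ℝ → ℝ) :
    Integrable g (volume.withDensity fun x => ENNReal.ofReal (f x)) ↔
      Integrable (fun x => f x * g x) := by
  have h : (fun x => ENNReal.ofReal (f x))
      = (fun x : ℝ => (((f x).toNNReal : ℝ≥0) : ℝ≥0∞)) := rfl
  rw [h, integrable_withDensity_iff_integrable_smul hf.real_toNNReal]
  apply integrable_congr
  filter_upwards with x
  simp [NNReal.smul_def, Real.coe_toNNReal _ (hf0 x)]


lemma gamma_key (a r : ℝ) :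
    (fun x => gammaPDFReal a r x * x)
      = Set.indicator (Ioi (0:ℝ)) (fun x => r ^ a / Gamma a * (x ^ a * exp (-(r * x)))) := by
  funext x
  unfold gammaPDFReal
  by_cases hx : x ∈ Ioi (0:ℝ)
  · rw [Set.indicator_of_mem hx, if_pos (le_of_lt hx)]
    have h1 : x ^ (a-1) * x = x ^ a := by
      nth_rewrite 2 [← Real.rpow_one x]
      rw [← Real.rpow_add hx]
      norm_num
    rw [mul_assoc, mul_assoc]
    rw [show x ^ (a-1) * (rexp (-(r*x)) * x) = (x ^ (a-1) * x) * rexp (-(r*x)) by ring, h1]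
  · rw [Set.indicator_of_notMem hx]
    have hx' : x ≤ 0 := not_lt.mp (by simpa using hx)
    rcases hx'.lt_or_eq with h | h
    · rw [if_neg (not_le.mpr h), zero_mul]
    · subst h; simp

lemma gamma_integrable_aux {a r : ℝ} (ha : 0 < a) (hr : 0 < r) :
    IntegrableOn (fun x : ℝ => r ^ a / Gamma a * (x ^ a * exp (-(r * x)))) (Ioi 0) := by
  apply Integrable.const_mul
  have h := integrableOn_rpow_mul_exp_neg_mul_rpow (s := a) (p := 1) (b := r)
    (by linarith) zero_lt_one hr
  simpa [Real.rpow_one, neg_mul, IntegrableOn] using h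

lemma gamma_integrable_id {a r : ℝ} (ha : 0 < a) (hr : 0 < r) :
    Integrable id (gammaMeasure a r) := by
  rw [gammaMeasure, show gammaPDF a r = fun x => ENNReal.ofReal (gammaPDFReal a r x) from rfl,
    bridge_int (measurable_gammaPDFReal a r) (gammaPDFReal_nonneg ha hr) id]
  rw [show (fun x => gammaPDFReal a r x * id x) = (fun x => gammaPDFReal a r x * x) from rfl,
    gamma_key a r]
  exact (gamma_integrable_aux ha hr).integrable_indicator measurableSet_Ioi

lemma gamma_integral_id {a r : ℝ} (ha : 0 < a) (hr : 0 < r) :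
    ∫ x, x ∂(gammaMeasure a r) = a / r := by
  rw [gammaMeasure, show gammaPDF a r = fun x => ENNReal.ofReal (gammaPDFReal a r x) from rfl,
    bridge (measurable_gammaPDFReal a r) (gammaPDFReal_nonneg ha hr) (fun x => x)]
  rw [show (fun x => gammaPDFReal a r x * x) = _ from gamma_key a r,
    integral_indicator measurableSet_Ioi, integral_const_mul]
  have key : ∫ x in Ioi (0:ℝ), x ^ a * exp (-(r * x)) = (1/r) ^ (a+1) * Gamma (a+1) := by
    have h := integral_rpow_mul_exp_neg_mul_Ioi (a := a + 1) (r := r) (by linarith) hr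
    simpa using h
  rw [key, Real.Gamma_add_one ha.ne']
  have hΓ : Gamma a ≠ 0 := (Real.Gamma_pos_of_pos ha).ne'
  have h2 : r ^ a * (1/r) ^ a = 1 := by
    rw [← Real.mul_rpow hr.le (by positivity), mul_one_div_cancel hr.ne', Real.one_rpow]
  have h1 : (1/r : ℝ) ^ (a+1) = (1/r) ^ a * (1/r) := by
    rw [Real.rpow_add (by positivity), Real.rpow_one]
  rw [h1]
  calc r ^ a / Gamma a * ((1/r) ^ a * (1/r) * (a * Gamma a))
      = (r ^ a * (1/r) ^ a) * ((1/r) * a) * (Gamma a / Gamma a) := by ring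
    _ = a / r := by rw [h2, div_self hΓ]; ring

lemma gamma_Iio_zero (a r : ℝ) : gammaMeasure a r (Iio 0) = 0 := by
  rw [gammaMeasure, withDensity_apply _ measurableSet_Iio]
  exact lintegral_gammaPDF_of_nonpos le_rfl

lemma odd_int_zero {b : ℝ} (hb : 0 < b) : ∫ x : ℝ, x * exp (-b * x ^ 2) = 0 := by
  set f : ℝ → ℝ := fun x => x * exp (-b * x ^ 2) with hf
  have A : ∫ x, f x = ∫ x, f (-x) := by
    conv_lhs => rw [← Measure.map_neg_eq_self (volume : Measure ℝ)]
    exact integral_map_equiv (Homeomorph.neg ℝ).toMeasurableEquiv f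
  have B : (fun x => f (-x)) = fun x => -f x := by
    funext x; simp only [hf, neg_sq]; ring
  rw [B, integral_neg] at A
  linarith

lemma sq_exp_int {b : ℝ} (hb : 0 < b) :
    ∫ x : ℝ, x ^ 2 * exp (-b * x ^ 2) = (1/b) ^ ((3:ℝ)/2) * Real.sqrt π / 2 := by
  have habs : ∫ x : ℝ, x ^ 2 * exp (-b * x ^ 2)
      = 2 * ∫ x in Ioi (0:ℝ), x ^ 2 * exp (-b * x ^ 2) := by
    rw [← integral_comp_abs (f := fun t => t ^ 2 * exp (-b * t ^ 2))]
    congr 1; funext x; rw [sq_abs]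
  have hsub := integral_comp_rpow_Ioi
    (g := fun y => Real.sqrt y / 2 * exp (-(b * y))) (p := 2) two_ne_zero
  have hLHS : ∫ x in Ioi (0:ℝ),
      (|(2:ℝ)| * x ^ ((2:ℝ) - 1)) • (Real.sqrt (x ^ (2:ℝ)) / 2 * exp (-(b * x ^ (2:ℝ))))
      = ∫ x in Ioi (0:ℝ), x ^ 2 * exp (-b * x ^ 2) := by
    apply setIntegral_congr_fun measurableSet_Ioi
    intro x hx
    have hx' : (0:ℝ) < x := hx
    have h2 : x ^ (2:ℝ) = x ^ 2 := by
      rw [show (2:ℝ) = ((2:ℕ):ℝ) by norm_num, Real.rpow_natCast]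
    have h1 : x ^ ((2:ℝ) - 1) = x := by norm_num
    dsimp only
    rw [h2, h1, Real.sqrt_sq hx'.le]
    simp only [smul_eq_mul, abs_of_pos (show (0:ℝ) < 2 by norm_num)]
    ring_nf
  have hval : ∫ y in Ioi (0:ℝ), Real.sqrt y / 2 * exp (-(b * y))
      = (1/2) * ((1/b) ^ ((3:ℝ)/2) * Gamma ((3:ℝ)/2)) := by
    have : ∀ y ∈ Ioi (0:ℝ), Real.sqrt y / 2 * exp (-(b * y))
        = (1/2) * (y ^ ((3:ℝ)/2 - 1) * exp (-(b * y))) := by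
      intro y hy
      rw [Real.sqrt_eq_rpow]
      norm_num
      ring
    rw [setIntegral_congr_fun measurableSet_Ioi this, integral_const_mul,
      integral_rpow_mul_exp_neg_mul_Ioi (by norm_num) hb]
  have hG : Gamma ((3:ℝ)/2) = Real.sqrt π / 2 := by
    rw [show (3:ℝ)/2 = 1/2 + 1 by norm_num, Real.Gamma_add_one (by norm_num),
      Real.Gamma_one_half_eq]
    ring
  rw [habs, ← hLHS, hsub, hval, hG]
  ring

lemma gauss_bridge (v : ℝ≥0) (hv : v ≠ 0) (g : ℝ → ℝ) :
    ∫ x, g x ∂(gaussianReal 0 v) = ∫ x, gaussianPDFReal 0 v x * g x := by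
  rw [gaussianReal_of_var_ne_zero 0 hv,
    show gaussianPDF 0 v = fun x => ENNReal.ofReal (gaussianPDFReal 0 v x) from rfl,
    bridge (measurable_gaussianPDFReal 0 v) (gaussianPDFReal_nonneg 0 v) g]

lemma gauss_bridge_int (v : ℝ≥0) (hv : v ≠ 0) (g : ℝ → ℝ) :
    Integrable g (gaussianReal 0 v) ↔ Integrable (fun x => gaussianPDFReal 0 v x * g x) := by
  rw [gaussianReal_of_var_ne_zero 0 hv,
    show gaussianPDF 0 v = fun x => ENNReal.ofReal (gaussianPDFReal 0 v x) from rfl,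
    bridge_int (measurable_gaussianPDFReal 0 v) (gaussianPDFReal_nonneg 0 v) g]

lemma gauss_pdf_eq (v : ℝ≥0) :
    gaussianPDFReal 0 v = fun x => (Real.sqrt (2*π*v))⁻¹ * exp (-(2*(v:ℝ))⁻¹ * x ^ 2) := by
  funext x
  rw [gaussianPDFReal]
  congr 1
  rw [sub_zero]
  congr 1
  field_simp

lemma gauss_integrable_id (v : ℝ≥0) (hv : v ≠ 0) : Integrable id (gaussianReal 0 v) := by
  have hv' : (0:ℝ) < v := by positivity
  rw [gauss_bridge_int v hv id, gauss_pdf_eq v]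
  have hb : (0:ℝ) < (2*(v:ℝ))⁻¹ := by positivity
  have := (integrable_mul_exp_neg_mul_sq hb).const_mul (Real.sqrt (2*π*v))⁻¹
  apply this.congr
  filter_upwards with x
  simp only [id]
  ring

lemma gauss_integral_id (v : ℝ≥0) (hv : v ≠ 0) : ∫ x, x ∂(gaussianReal 0 v) = 0 := by
  rw [show (fun x : ℝ => x) = id from rfl] at *
  rw [gauss_bridge v hv id, gauss_pdf_eq v]
  have hb : (0:ℝ) < (2*(v:ℝ))⁻¹ := by positivity
  have h : (fun x => (Real.sqrt (2*π*v))⁻¹ * exp (-(2*(v:ℝ))⁻¹ * x ^ 2) * id x)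
      = fun x => (Real.sqrt (2*π*v))⁻¹ * (x * exp (-(2*(v:ℝ))⁻¹ * x ^ 2)) := by
    funext x; simp only [id]; ring
  rw [h, integral_const_mul, odd_int_zero hb, mul_zero]

lemma gauss_integrable_sq (v : ℝ≥0) (hv : v ≠ 0) :
    Integrable (fun x => x ^ 2) (gaussianReal 0 v) := by
  have hv' : (0:ℝ) < v := by positivity
  rw [gauss_bridge_int v hv _, gauss_pdf_eq v]
  have hb : (0:ℝ) < (2*(v:ℝ))⁻¹ := by positivity
  have h2 : Integrable (fun x : ℝ => x ^ 2 * exp (-(2*(v:ℝ))⁻¹ * x ^ 2)) := by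
    have := integrable_rpow_mul_exp_neg_mul_sq hb (s := 2) (by norm_num)
    apply this.congr
    filter_upwards with x
    rw [show (2:ℝ) = ((2:ℕ):ℝ) by norm_num, Real.rpow_natCast]
  have := h2.const_mul (Real.sqrt (2*π*v))⁻¹
  apply this.congr
  filter_upwards with x
  ring

lemma gauss_integral_sq (v : ℝ≥0) (hv : v ≠ 0) :
    ∫ x, x ^ 2 ∂(gaussianReal 0 v) = v := by
  have hv' : (0:ℝ) < v := by positivity
  rw [gauss_bridge v hv _, gauss_pdf_eq v]
  have hb : (0:ℝ) < (2*(v:ℝ))⁻¹ := by positivity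
  have h : (fun x => (Real.sqrt (2*π*v))⁻¹ * exp (-(2*(v:ℝ))⁻¹ * x ^ 2) * x ^ 2)
      = fun x => (Real.sqrt (2*π*v))⁻¹ * (x ^ 2 * exp (-(2*(v:ℝ))⁻¹ * x ^ 2)) := by
    funext x; ring
  rw [h, integral_const_mul, sq_exp_int hb]
  have h1b : (1 : ℝ) / (2*(v:ℝ))⁻¹ = 2 * v := by field_simp
  rw [h1b]
  have h32 : (2 * (v:ℝ)) ^ ((3:ℝ)/2) = 2 * v * Real.sqrt (2 * v) := by
    rw [show (3:ℝ)/2 = 1 + 1/2 by norm_num, Real.rpow_add (by positivity), Real.rpow_one,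
      ← Real.sqrt_eq_rpow]
  have hsplit : Real.sqrt (2*π*(v:ℝ)) = Real.sqrt π * Real.sqrt (2*v) := by
    rw [show 2*π*(v:ℝ) = π * (2*v) by ring, Real.sqrt_mul Real.pi_pos.le]
  rw [h32, hsplit]
  have hπ : (0:ℝ) < Real.sqrt π := Real.sqrt_pos.mpr Real.pi_pos
  have h2v : (0:ℝ) < Real.sqrt (2*v) := Real.sqrt_pos.mpr (by positivity)
  field_simp

/-- mean and variance of the single-imputation mean estimator under
ML imputation `μ̂_SI,M = μ + σ·(Z̄_obs + (n_mis/n)·√(U_obs/(ν_obs+c))·Z̄_imp)`. -/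
theorem stmt5
    {Ω : Type*} [MeasurableSpace Ω] (P : Measure Ω) [IsProbabilityMeasure P]
    (μ σ : ℝ) (hσ : 0 < σ)
    (n_obs n_mis : ℕ) (hnobs : 2 ≤ n_obs) (hnmis : 2 ≤ n_mis)
    (U_obs Z_obs Z_imp U_imp : Ω → ℝ)
    (hUmeas : Measurable U_obs) (hZmeas : Measurable Z_obs)
    (hZimpmeas : Measurable Z_imp) (hUimpmeas : Measurable U_imp)
    (hU : P.map U_obs = gammaMeasure (((n_obs : ℝ) - 1) / 2) (1 / 2))
    (hZ : P.map Z_obs = gaussianReal 0 (1 / (n_obs : ℝ≥0)))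
    (hZimp : P.map Z_imp = gaussianReal 0 (1 / (n_mis : ℝ≥0)))
    (hUimp : P.map U_imp = gammaMeasure (((n_mis : ℝ) - 1) / 2) (1 / 2))
    (hindep : iIndepFun ![U_obs, Z_obs, Z_imp, U_imp] P)
    (c : ℝ) (hc : 0 < ((n_obs : ℝ) - 1) + c) :
    (∫ ω, μ + σ * (Z_obs ω
        + ((n_mis : ℝ) / ((n_obs : ℝ) + (n_mis : ℝ)))
            * Real.sqrt (U_obs ω / (((n_obs : ℝ) - 1) + c)) * Z_imp ω) ∂P) = μ
    ∧ variance (fun ω => μ + σ * (Z_obs ω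
        + ((n_mis : ℝ) / ((n_obs : ℝ) + (n_mis : ℝ)))
            * Real.sqrt (U_obs ω / (((n_obs : ℝ) - 1) + c)) * Z_imp ω)) P
      = σ ^ 2 * (1 / (n_obs : ℝ)
          + (n_mis : ℝ) * ((n_obs : ℝ) - 1)
              / (((n_obs : ℝ) + (n_mis : ℝ)) ^ 2 * ((n_obs : ℝ) + c - 1))) := by
  have hno2 : (2:ℝ) ≤ n_obs := by exact_mod_cast hnobs
  have hnm2 : (2:ℝ) ≤ n_mis := by exact_mod_cast hnmis
  have hno : (0:ℝ) < n_obs := by linarith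
  have hnm : (0:ℝ) < n_mis := by linarith
  have hν : (0:ℝ) < (n_obs:ℝ) - 1 := by linarith
  set k : ℝ := ((n_obs:ℝ) - 1) + c with hk_def
  have hk : 0 < k := hc
  set aC : ℝ := (n_mis:ℝ) / ((n_obs:ℝ) + (n_mis:ℝ)) with haC_def
  set V : Ω → ℝ := fun ω => Real.sqrt (U_obs ω / k) with hV_def
  set W : Ω → ℝ := fun ω => V ω * Z_imp ω with hW_def
  set Y : Ω → ℝ := fun ω => Z_obs ω + aC * W ω with hY_def
  have hvo : (1 / (n_obs : ℝ≥0)) ≠ 0 := by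
    simp only [ne_eq, one_div, inv_eq_zero, Nat.cast_eq_zero]
    omega
  have hvm : (1 / (n_mis : ℝ≥0)) ≠ 0 := by
    simp only [ne_eq, one_div, inv_eq_zero, Nat.cast_eq_zero]
    omega
  have hvo_coe : ((1 / (n_obs : ℝ≥0) : ℝ≥0) : ℝ) = 1 / (n_obs:ℝ) := by push_cast; ring
  have hvm_coe : ((1 / (n_mis : ℝ≥0) : ℝ≥0) : ℝ) = 1 / (n_mis:ℝ) := by push_cast; ring
  -- moments of Z_obs
  have hZint : Integrable Z_obs P := by
    have h := gauss_integrable_id _ hvo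
    rw [← hZ] at h
    exact (integrable_map_measure aestronglyMeasurable_id hZmeas.aemeasurable).mp h
  have hZmean : ∫ ω, Z_obs ω ∂P = 0 := by
    have h0 : ∫ ω, Z_obs ω ∂P = ∫ x, x ∂(P.map Z_obs) :=
      (integral_map hZmeas.aemeasurable measurable_id.aestronglyMeasurable).symm
    rw [h0, hZ, gauss_integral_id _ hvo]
  have hZsqint : Integrable (fun ω => Z_obs ω ^ 2) P := by
    have h := gauss_integrable_sq _ hvo
    rw [← hZ] at h
    exact (integrable_map_measure (by fun_prop) hZmeas.aemeasurable).mp h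
  have hZsqmean : ∫ ω, Z_obs ω ^ 2 ∂P = 1 / (n_obs:ℝ) := by
    have h0 : ∫ ω, Z_obs ω ^ 2 ∂P = ∫ x, x ^ 2 ∂(P.map Z_obs) :=
      (integral_map hZmeas.aemeasurable
        (measurable_id.pow_const 2).aestronglyMeasurable).symm
    rw [h0, hZ, gauss_integral_sq _ hvo, hvo_coe]
  -- moments of Z_imp
  have hZiint : Integrable Z_imp P := by
    have h := gauss_integrable_id _ hvm
    rw [← hZimp] at h
    exact (integrable_map_measure aestronglyMeasurable_id hZimpmeas.aemeasurable).mp h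
  have hZimean : ∫ ω, Z_imp ω ∂P = 0 := by
    have h0 : ∫ ω, Z_imp ω ∂P = ∫ x, x ∂(P.map Z_imp) :=
      (integral_map hZimpmeas.aemeasurable measurable_id.aestronglyMeasurable).symm
    rw [h0, hZimp, gauss_integral_id _ hvm]
  have hZisqint : Integrable (fun ω => Z_imp ω ^ 2) P := by
    have h := gauss_integrable_sq _ hvm
    rw [← hZimp] at h
    exact (integrable_map_measure (by fun_prop) hZimpmeas.aemeasurable).mp h
  have hZisqmean : ∫ ω, Z_imp ω ^ 2 ∂P = 1 / (n_mis:ℝ) := by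
    have h0 : ∫ ω, Z_imp ω ^ 2 ∂P = ∫ x, x ^ 2 ∂(P.map Z_imp) :=
      (integral_map hZimpmeas.aemeasurable
        (measurable_id.pow_const 2).aestronglyMeasurable).symm
    rw [h0, hZimp, gauss_integral_sq _ hvm, hvm_coe]
  -- moments of U_obs
  have ha0 : (0:ℝ) < ((n_obs:ℝ) - 1) / 2 := by linarith
  have hUint : Integrable U_obs P := by
    have h := gamma_integrable_id ha0 (by norm_num : (0:ℝ) < 1/2)
    rw [← hU] at h
    exact (integrable_map_measure aestronglyMeasurable_id hUmeas.aemeasurable).mp h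
  have hUmean : ∫ ω, U_obs ω ∂P = (n_obs:ℝ) - 1 := by
    have h0 : ∫ ω, U_obs ω ∂P = ∫ x, x ∂(P.map U_obs) :=
      (integral_map hUmeas.aemeasurable measurable_id.aestronglyMeasurable).symm
    rw [h0, hU, gamma_integral_id ha0 (by norm_num : (0:ℝ) < 1/2)]
    field_simp
  have hU0 : ∀ᵐ ω ∂P, 0 ≤ U_obs ω := by
    have hPre : P (U_obs ⁻¹' (Iio 0)) = 0 := by
      rw [← Measure.map_apply hUmeas measurableSet_Iio, hU]
      exact gamma_Iio_zero _ _
    rw [ae_iff]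
    convert hPre using 2
    ext ω
    simp [not_le]
  -- V facts
  have hVmeas : Measurable V := (hUmeas.div_const k).sqrt
  have hsqrt_le : ∀ t : ℝ, Real.sqrt t ≤ 1 + |t| := by
    intro t
    have h1 : Real.sqrt t ≤ Real.sqrt ((1 + |t|) ^ 2) :=
      Real.sqrt_le_sqrt (by nlinarith [abs_nonneg t, le_abs_self t])
    rwa [Real.sqrt_sq (by positivity)] at h1
  have hVint : Integrable V P := by
    have hbound : Integrable (fun ω => 1 + |U_obs ω| / k) P :=
      (integrable_const 1).add (hUint.abs.div_const k)
    refine hbound.mono' hVmeas.aestronglyMeasurable ?_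
    filter_upwards with ω
    rw [Real.norm_eq_abs, abs_of_nonneg (Real.sqrt_nonneg _)]
    calc Real.sqrt (U_obs ω / k) ≤ 1 + |U_obs ω / k| := hsqrt_le _
      _ = 1 + |U_obs ω| / k := by rw [abs_div, abs_of_pos hk]
  -- independence
  have hUZi : IndepFun U_obs Z_imp P := by
    have h := hindep.indepFun (show (0 : Fin 4) ≠ 2 by decide)
    simpa using h
  have hVZi : IndepFun V Z_imp P :=
    hUZi.comp ((measurable_id.div_const k).sqrt) measurable_id
  have hWint : Integrable W P := hVZi.integrable_mul hVint hZiint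
  have hWmean : ∫ ω, W ω ∂P = 0 := by
    calc ∫ ω, W ω ∂P = (∫ ω, V ω ∂P) * ∫ ω, Z_imp ω ∂P :=
          hVZi.integral_fun_mul_eq_mul_integral hVint.aestronglyMeasurable hZiint.aestronglyMeasurable
      _ = 0 := by rw [hZimean, mul_zero]
  -- composed family
  have hFindep : iIndepFun ![V, Z_obs, Z_imp, U_imp] P := by
    have hφ : ∀ i : Fin 4, Measurable (![(fun x : ℝ => Real.sqrt (x / k)), id, id, id] i) := by
      intro i
      fin_cases i
      · exact (measurable_id.div_const k).sqrt
      · exact measurable_id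
      · exact measurable_id
      · exact measurable_id
    have h := hindep.comp _ hφ
    have heq : (fun i => ![(fun x : ℝ => Real.sqrt (x / k)), id, id, id] i
        ∘ ![U_obs, Z_obs, Z_imp, U_imp] i) = ![V, Z_obs, Z_imp, U_imp] := by
      funext i
      fin_cases i <;> rfl
    rwa [heq] at h
  have hFmeas : ∀ i : Fin 4, Measurable (![V, Z_obs, Z_imp, U_imp] i) := by
    intro i
    fin_cases i
    · exact hVmeas
    · exact hZmeas
    · exact hZimpmeas
    · exact hUimpmeas
  have hZW : IndepFun Z_obs W P := by
    have h := hFindep.indepFun_mul_right hFmeas 1 0 2 (by decide) (by decide)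
    exact h
  have hZWint : Integrable (fun ω => Z_obs ω * W ω) P := hZW.integrable_mul hZint hWint
  have hZWmean : ∫ ω, Z_obs ω * W ω ∂P = 0 := by
    calc ∫ ω, Z_obs ω * W ω ∂P = (∫ ω, Z_obs ω ∂P) * ∫ ω, W ω ∂P :=
          hZW.integral_fun_mul_eq_mul_integral hZint.aestronglyMeasurable hWint.aestronglyMeasurable
      _ = 0 := by rw [hZmean, zero_mul]
  -- squares
  have hVsq_ae : (fun ω => V ω ^ 2) =ᵐ[P] fun ω => U_obs ω / k := by
    filter_upwards [hU0] with ω h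
    rw [hV_def]
    exact Real.sq_sqrt (div_nonneg h hk.le)
  have hVsqint : Integrable (fun ω => V ω ^ 2) P := (hUint.div_const k).congr hVsq_ae.symm
  have hVsqmean : ∫ ω, V ω ^ 2 ∂P = ((n_obs:ℝ) - 1) / k := by
    rw [integral_congr_ae hVsq_ae, integral_div, hUmean]
  have hVZsq : IndepFun (fun ω => V ω ^ 2) (fun ω => Z_imp ω ^ 2) P :=
    hUZi.comp ((((measurable_id.div_const k).sqrt).pow_const 2))
      (measurable_id.pow_const 2)
  have hWsq_eq : (fun ω => W ω ^ 2) = fun ω => V ω ^ 2 * Z_imp ω ^ 2 := by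
    funext ω; rw [hW_def]; ring
  have hWsqint : Integrable (fun ω => W ω ^ 2) P := by
    rw [hWsq_eq]
    exact hVZsq.integrable_mul hVsqint hZisqint
  have hWsqmean : ∫ ω, W ω ^ 2 ∂P = (((n_obs:ℝ) - 1) / k) * (1 / (n_mis:ℝ)) := by
    calc ∫ ω, W ω ^ 2 ∂P = ∫ ω, V ω ^ 2 * Z_imp ω ^ 2 ∂P := by rw [hWsq_eq]
      _ = (∫ ω, V ω ^ 2 ∂P) * ∫ ω, Z_imp ω ^ 2 ∂P :=
          hVZsq.integral_fun_mul_eq_mul_integral hVsqint.aestronglyMeasurable hZisqint.aestronglyMeasurable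
      _ = (((n_obs:ℝ) - 1) / k) * (1 / (n_mis:ℝ)) := by rw [hVsqmean, hZisqmean]
  -- Y facts
  have hYint : Integrable Y P := hZint.add (hWint.const_mul aC)
  have hYmean : ∫ ω, Y ω ∂P = 0 := by
    calc ∫ ω, Y ω ∂P = (∫ ω, Z_obs ω ∂P) + ∫ ω, aC * W ω ∂P :=
          integral_add hZint (hWint.const_mul aC)
      _ = 0 := by rw [integral_const_mul, hZmean, hWmean]; ring
  have hYmeas : Measurable Y := hZmeas.add ((hVmeas.mul hZimpmeas).const_mul aC)
  have hYsq_eq : (fun ω => Y ω ^ 2)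
      = fun ω => Z_obs ω ^ 2 + (2 * aC) * (Z_obs ω * W ω) + aC ^ 2 * W ω ^ 2 := by
    funext ω; rw [hY_def]; ring
  have hI1 : Integrable (fun ω => Z_obs ω ^ 2 + (2 * aC) * (Z_obs ω * W ω)) P :=
    hZsqint.add (hZWint.const_mul (2 * aC))
  have hYsqint : Integrable (fun ω => Y ω ^ 2) P := by
    rw [hYsq_eq]
    exact hI1.add (hWsqint.const_mul (aC ^ 2))
  have hYsqmean : ∫ ω, Y ω ^ 2 ∂P
      = 1 / (n_obs:ℝ) + aC ^ 2 * ((((n_obs:ℝ) - 1) / k) * (1 / (n_mis:ℝ))) := by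
    calc ∫ ω, Y ω ^ 2 ∂P
        = ∫ ω, (Z_obs ω ^ 2 + (2 * aC) * (Z_obs ω * W ω)) + aC ^ 2 * W ω ^ 2 ∂P := by
          rw [hYsq_eq]
      _ = (∫ ω, Z_obs ω ^ 2 + (2 * aC) * (Z_obs ω * W ω) ∂P) + ∫ ω, aC ^ 2 * W ω ^ 2 ∂P :=
          integral_add hI1 (hWsqint.const_mul (aC ^ 2))
      _ = ((∫ ω, Z_obs ω ^ 2 ∂P) + ∫ ω, (2 * aC) * (Z_obs ω * W ω) ∂P)
            + ∫ ω, aC ^ 2 * W ω ^ 2 ∂P := by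
          exact congrArg (fun t => t + ∫ ω, aC ^ 2 * W ω ^ 2 ∂P)
            (integral_add hZsqint (hZWint.const_mul (2 * aC)))
      _ = 1 / (n_obs:ℝ) + aC ^ 2 * ((((n_obs:ℝ) - 1) / k) * (1 / (n_mis:ℝ))) := by
          rw [integral_const_mul, integral_const_mul, hZsqmean, hZWmean, hWsqmean]
          ring
  -- rewrite statement function
  have hfun : (fun ω => μ + σ * (Z_obs ω
      + ((n_mis : ℝ) / ((n_obs : ℝ) + (n_mis : ℝ)))
        * Real.sqrt (U_obs ω / (((n_obs : ℝ) - 1) + c)) * Z_imp ω))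
      = fun ω => μ + σ * Y ω := by
    funext ω
    rw [hY_def, hW_def, hV_def]
    ring
  have hmean : (∫ ω, μ + σ * Y ω ∂P) = μ := by
    calc ∫ ω, μ + σ * Y ω ∂P = (∫ _ω, μ ∂P) + ∫ ω, σ * Y ω ∂P :=
          integral_add (integrable_const μ) (hYint.const_mul σ)
      _ = μ := by rw [integral_const_mul, hYmean, integral_const]; simp
  constructor
  · calc (∫ ω, μ + σ * (Z_obs ω
        + ((n_mis : ℝ) / ((n_obs : ℝ) + (n_mis : ℝ)))
            * Real.sqrt (U_obs ω / (((n_obs : ℝ) - 1) + c)) * Z_imp ω) ∂P)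
        = ∫ ω, μ + σ * Y ω ∂P := by rw [← hfun]
      _ = μ := hmean
  · rw [hfun]
    have hYmem : MemLp Y 2 P :=
      (memLp_two_iff_integrable_sq hYmeas.aestronglyMeasurable).mpr hYsqint
    have hXmem : MemLp (fun ω => μ + σ * Y ω) 2 P := by
      have := (memLp_const (μ := P) (p := 2) μ).add (hYmem.const_mul σ)
      exact this
    rw [variance_eq_sub hXmem]
    have hXint : Integrable (fun ω => μ ^ 2 + (2 * μ * σ) * Y ω) P :=
      (integrable_const (μ ^ 2)).add (hYint.const_mul (2 * μ * σ))
    have hXsqmean : ∫ ω, (μ + σ * Y ω) ^ 2 ∂P = μ ^ 2 + σ ^ 2 * ∫ ω, Y ω ^ 2 ∂P := by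
      calc ∫ ω, (μ + σ * Y ω) ^ 2 ∂P
          = ∫ ω, (μ ^ 2 + (2 * μ * σ) * Y ω) + σ ^ 2 * Y ω ^ 2 ∂P := by
            congr 1; funext ω; ring
        _ = (∫ ω, μ ^ 2 + (2 * μ * σ) * Y ω ∂P) + ∫ ω, σ ^ 2 * Y ω ^ 2 ∂P :=
            integral_add hXint (hYsqint.const_mul (σ ^ 2))
        _ = ((∫ _ω, μ ^ 2 ∂P) + ∫ ω, (2 * μ * σ) * Y ω ∂P) + ∫ ω, σ ^ 2 * Y ω ^ 2 ∂P := by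
            exact congrArg (fun t => t + ∫ ω, σ ^ 2 * Y ω ^ 2 ∂P)
              (integral_add (integrable_const (μ ^ 2)) (hYint.const_mul (2 * μ * σ)))
        _ = μ ^ 2 + σ ^ 2 * ∫ ω, Y ω ^ 2 ∂P := by
            rw [integral_const_mul, integral_const_mul, hYmean, integral_const]
            simp
    have hXsq' : P[(fun ω => μ + σ * Y ω) ^ 2] = μ ^ 2 + σ ^ 2 * ∫ ω, Y ω ^ 2 ∂P := by
      rw [show ((fun ω => μ + σ * Y ω) ^ 2) = fun ω => (μ + σ * Y ω) ^ 2 from by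
        funext ω; simp [Pi.pow_apply]]
      exact hXsqmean
    have hXm' : P[fun ω => μ + σ * Y ω] = μ := hmean
    rw [hXsq', hXm', hYsqmean]
    have hn : (0:ℝ) < (n_obs:ℝ) + (n_mis:ℝ) := by linarith
    have hkk : k = (n_obs:ℝ) + c - 1 := by rw [hk_def]; ring
    rw [haC_def, hkk]
    have hkk' : (0:ℝ) < (n_obs:ℝ) + c - 1 := by rw [← hkk]; exact hk
    field_simp
    ring
end

section
/- Define the single-imputation mean estimator under posterior-draw imputation μ̂_SI,PD = μ + σ·(Z̄_obs + (n_mis/n)·√(U_obs/U_PD)·(Z_PD + Z̄_imp)). If ν_PD > 1 then E[μ̂_SI,PD] = μ. If moreover ν_PD > 2 then Var(μ̂_SI,PD) = (σ²/n_obs)·(1 + n_mis·(n_obs − 1)/(n·(n_obs + ν_prior − 3))). -/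
open MeasureTheory ProbabilityTheory Real Set
open scoped ENNReal NNReal

lemma gamma_pdf_moment {a r p : ℝ} (ha : 0 < a) (hr : 0 < r) (hap : 0 < a + p) :
    Integrable (fun x => x ^ p * gammaPDFReal a r x) volume ∧
    ∫ x, x ^ p * gammaPDFReal a r x
      = Real.Gamma (a + p) / (Real.Gamma a * r ^ p) := by
  have hIoi : ∀ x ∈ Ioi (0:ℝ), x ^ p * gammaPDFReal a r x
      = (r ^ a / Real.Gamma a) * (x ^ (a + p - 1) * Real.exp (-(r * x))) := by
    intro x hx
    have hx' : (0:ℝ) < x := hx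
    rw [gammaPDFReal, if_pos hx'.le]
    rw [show a + p - 1 = p + (a - 1) by ring, rpow_add hx']
    ring
  have hint : IntegrableOn (fun x => x ^ (a + p - 1) * Real.exp (-(r * x))) (Ioi 0) := by
    have := integrableOn_rpow_mul_exp_neg_mul_rpow (p := 1) (s := a + p - 1) (b := r)
      (by linarith) zero_lt_one hr
    simpa [rpow_one] using this
  have hzero : ∀ x ∈ Iio (0:ℝ), x ^ p * gammaPDFReal a r x = 0 := by
    intro x hx
    rw [gammaPDFReal, if_neg (not_le.mpr hx), mul_zero]
  have hInt : Integrable (fun x => x ^ p * gammaPDFReal a r x) volume := by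
    rw [← integrableOn_univ, ← Iio_union_Ici (a := (0:ℝ)), integrableOn_union]
    constructor
    · exact (integrableOn_congr_fun hzero measurableSet_Iio).mpr (integrableOn_zero)
    · rw [← Ioi_union_left, integrableOn_union]
      refine ⟨?_, (integrableOn_singleton_iff).mpr (Or.inr (by simp))⟩
      exact (integrableOn_congr_fun hIoi measurableSet_Ioi).mpr
        (hint.const_mul _)
  refine ⟨hInt, ?_⟩
  have h1 : ∫ x, x ^ p * gammaPDFReal a r x
      = ∫ x in Ici (0:ℝ), x ^ p * gammaPDFReal a r x := by
    refine (setIntegral_eq_integral_of_forall_compl_eq_zero ?_).symm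
    intro x hx
    exact hzero x (by simpa using hx)
  rw [h1, integral_Ici_eq_integral_Ioi,
    setIntegral_congr_fun measurableSet_Ioi hIoi, integral_const_mul,
    integral_rpow_mul_exp_neg_mul_Ioi (by linarith) hr]
  rw [div_rpow zero_le_one hr.le, one_rpow, rpow_add hr]
  field_simp

lemma gamma_meas : Measurable (gammaPDF a r) :=
  (measurable_gammaPDFReal a r).ennreal_ofReal

lemma integrable_rpow_gammaMeasure {a r p : ℝ} (ha : 0 < a) (hr : 0 < r) (hap : 0 < a + p) :
    Integrable (fun x : ℝ => x ^ p) (gammaMeasure a r) := by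
  rw [gammaMeasure, integrable_withDensity_iff gamma_meas
    (Filter.Eventually.of_forall fun x => ENNReal.ofReal_lt_top)]
  refine ((gamma_pdf_moment ha hr hap).1).congr ?_
  refine Filter.Eventually.of_forall fun x => ?_
  simp only [show gammaPDF a r x = ENNReal.ofReal (gammaPDFReal a r x) from rfl,
    ENNReal.toReal_ofReal (gammaPDFReal_nonneg ha hr x)]

lemma integral_rpow_gammaMeasure {a r p : ℝ} (ha : 0 < a) (hr : 0 < r) (hap : 0 < a + p) :
    ∫ x, x ^ p ∂(gammaMeasure a r) = Real.Gamma (a + p) / (Real.Gamma a * r ^ p) := by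
  rw [gammaMeasure, ← (gamma_pdf_moment ha hr hap).2]
  have h : (gammaPDF a r) = fun x => (((gammaPDFReal a r x).toNNReal : ℝ≥0) : ℝ≥0∞) := rfl
  rw [h, integral_withDensity_eq_integral_smul
    ((measurable_gammaPDFReal a r).real_toNNReal)]
  congr 1; ext x
  rw [NNReal.smul_def, smul_eq_mul, Real.coe_toNNReal _ (gammaPDFReal_nonneg ha hr x), mul_comm]

lemma ae_nonneg_gammaMeasure {a r : ℝ} : ∀ᵐ x ∂(gammaMeasure a r), 0 ≤ x := by
  rw [ae_iff]
  have : {x : ℝ | ¬ 0 ≤ x} = Iio 0 := by ext x; simp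
  rw [this, gammaMeasure, withDensity_apply _ measurableSet_Iio]
  exact lintegral_gammaPDF_of_nonpos le_rfl

lemma gaussian_transfer {v : ℝ≥0} (hv : v ≠ 0) (g : ℝ → ℝ) :
    ∫ x, g x ∂(gaussianReal 0 v) = ∫ x, g x * gaussianPDFReal 0 v x := by
  rw [gaussianReal_of_var_ne_zero _ hv]
  have h : (gaussianPDF 0 v) = fun x => (((gaussianPDFReal 0 v x).toNNReal : ℝ≥0) : ℝ≥0∞) := rfl
  rw [h, integral_withDensity_eq_integral_smul ((measurable_gaussianPDFReal 0 v).real_toNNReal)]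
  congr 1; ext x
  rw [NNReal.smul_def, smul_eq_mul, Real.coe_toNNReal _ (gaussianPDFReal_nonneg 0 v x), mul_comm]

lemma gaussian_integrable_transfer {v : ℝ≥0} (hv : v ≠ 0) {g : ℝ → ℝ}
    (h : Integrable (fun x => g x * gaussianPDFReal 0 v x) volume) :
    Integrable g (gaussianReal 0 v) := by
  rw [gaussianReal_of_var_ne_zero _ hv, gaussianPDF_def, integrable_withDensity_iff
    (measurable_gaussianPDFReal 0 v).ennreal_ofReal
    (Filter.Eventually.of_forall fun x => ENNReal.ofReal_lt_top)]
  refine h.congr (Filter.Eventually.of_forall fun x => ?_)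
  simp only [ENNReal.toReal_ofReal (gaussianPDFReal_nonneg 0 v x)]

lemma integrable_pow_gaussian {v : ℝ≥0} (hv : v ≠ 0) (n : ℕ) :
    Integrable (fun x : ℝ => x ^ n) (gaussianReal 0 v) := by
  refine gaussian_integrable_transfer hv ?_
  have hvpos : (0:ℝ) < (v:ℝ) := NNReal.coe_pos.mpr (pos_iff_ne_zero.mpr hv)
  have hb : (0:ℝ) < (2 * (v:ℝ))⁻¹ := by positivity
  have h := (integrable_rpow_mul_exp_neg_mul_sq hb (s := (n:ℝ))
    (lt_of_lt_of_le neg_one_lt_zero (Nat.cast_nonneg n))).const_mul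
    ((Real.sqrt (2 * π * (v:ℝ)))⁻¹)
  refine h.congr (Filter.Eventually.of_forall fun x => ?_)
  simp only [Real.rpow_natCast, gaussianPDFReal]
  rw [show -(x - 0)^2 / (2 * (v:ℝ)) = -(2 * (v:ℝ))⁻¹ * x ^ 2 by rw [sub_zero]; field_simp]
  ring

lemma integrable_id_gaussian {v : ℝ≥0} (hv : v ≠ 0) :
    Integrable (fun x : ℝ => x) (gaussianReal 0 v) := by
  have := integrable_pow_gaussian hv 1
  simpa using this

lemma integral_id_gaussian (v : ℝ≥0) : ∫ x, x ∂(gaussianReal 0 v) = 0 := by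
  by_cases hv : v = 0
  · simp [hv]
  have hmap := gaussianReal_map_const_mul (μ := 0) (v := v) (-1)
  have h1 : (NNReal.mk ((-1:ℝ)^2) (sq_nonneg _)) = 1 := by ext; norm_num
  rw [h1, mul_zero, one_mul] at hmap
  have h2 := integral_map (φ := fun x : ℝ => -1 * x) (f := fun x : ℝ => x)
    (μ := gaussianReal 0 v) (measurable_id.const_mul (-1:ℝ)).aemeasurable
    measurable_id.aestronglyMeasurable
  rw [hmap] at h2
  simp only [neg_one_mul] at h2
  rw [integral_neg] at h2
  linarith

lemma integral_sq_gaussian {v : ℝ≥0} (hv : v ≠ 0) :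
    ∫ x, x ^ 2 ∂(gaussianReal 0 v) = (v : ℝ) := by
  have hvpos : (0:ℝ) < (v:ℝ) := NNReal.coe_pos.mpr (pos_iff_ne_zero.mpr hv)
  set b : ℝ := (2 * (v:ℝ))⁻¹ with hbdef
  have hb : (0:ℝ) < b := by positivity
  set c : ℝ := (Real.sqrt (2 * π * (v:ℝ)))⁻¹ with hcdef
  have hint : Integrable (fun x : ℝ => x ^ 2 * Real.exp (-b * x ^ 2)) volume := by
    have h := integrable_rpow_mul_exp_neg_mul_sq hb (s := (2:ℝ)) (by norm_num)
    refine h.congr (Filter.Eventually.of_forall fun x => ?_)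
    simp only [show ((2:ℝ)) = ((2:ℕ):ℝ) by norm_num, Real.rpow_natCast]
  have heq : ∀ x : ℝ, x ^ 2 * gaussianPDFReal 0 v x = c * (x ^ 2 * Real.exp (-b * x ^ 2)) := by
    intro x
    rw [gaussianPDFReal, show -(x - 0)^2 / (2 * (v:ℝ)) = -b * x ^ 2 by
      rw [sub_zero, hbdef]; field_simp]
    ring
  rw [gaussian_transfer hv]
  simp_rw [heq]
  rw [integral_const_mul]
  -- even function: ∫_ℝ = 2 ∫_{Ioi 0}
  have hsplit : ∫ x : ℝ, x ^ 2 * Real.exp (-b * x ^ 2)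
      = 2 * ∫ x in Ioi (0:ℝ), x ^ 2 * Real.exp (-b * x ^ 2) := by
    have hcompl := integral_add_compl (measurableSet_Ioi (a := (0:ℝ))) hint
    rw [compl_Ioi] at hcompl
    have hneg : ∫ x in Iic (0:ℝ), x ^ 2 * Real.exp (-b * x ^ 2)
        = ∫ x in Ioi (0:ℝ), x ^ 2 * Real.exp (-b * x ^ 2) := by
      have hcn := integral_comp_neg_Ioi (c := (0:ℝ))
        (f := fun x => x ^ 2 * Real.exp (-b * x ^ 2))
      rw [neg_zero] at hcn
      rw [← hcn]
      refine setIntegral_congr_fun measurableSet_Ioi fun x _ => ?_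
      simp [neg_sq]
    linarith
  rw [hsplit]
  have hIoi : ∫ x in Ioi (0:ℝ), x ^ 2 * Real.exp (-b * x ^ 2)
      = b ^ (-(3:ℝ)/2) * (1/2) * Real.Gamma (3/2) := by
    have h := integral_rpow_mul_exp_neg_mul_rpow (p := 2) (q := 2) (b := b)
      (by norm_num) (by norm_num) hb
    simp only [show ((2:ℝ)) = ((2:ℕ):ℝ) by norm_num, Real.rpow_natCast] at h
    rw [h]
    norm_num
  rw [hIoi]
  have hG : Real.Gamma (3/2) = Real.sqrt π / 2 := by
    rw [show (3:ℝ)/2 = 1/2 + 1 by norm_num, Real.Gamma_add_one (by norm_num),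
      Real.Gamma_one_half_eq]
    ring
  have hbval : b ^ (-(3:ℝ)/2) = (2 * (v:ℝ)) ^ ((3:ℝ)/2) := by
    rw [hbdef, Real.inv_rpow (by positivity), show (-(3:ℝ))/2 = -((3:ℝ)/2) by norm_num,
      Real.rpow_neg (by positivity), inv_inv]
  rw [hbval, hG, hcdef]
  rw [show (3:ℝ)/2 = 1 + 1/2 by norm_num, Real.rpow_add (by positivity), Real.rpow_one,
    ← Real.sqrt_eq_rpow, show 2 * π * (v:ℝ) = π * (2 * (v:ℝ)) by ring,
    Real.sqrt_mul pi_pos.le]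
  have h1 : Real.sqrt (2 * (v:ℝ)) ≠ 0 := by positivity
  have h2 : Real.sqrt π ≠ 0 := by positivity
  field_simp

section Helpers
variable {Ω : Type*} [MeasurableSpace Ω] {P : Measure Ω}

lemma map_integral {X : Ω → ℝ} (hX : Measurable X) {m : Measure ℝ}
    (hm : P.map X = m) {g : ℝ → ℝ} (hg : Measurable g) :
    ∫ ω, g (X ω) ∂P = ∫ x, g x ∂m := by
  rw [← hm, integral_map hX.aemeasurable hg.aestronglyMeasurable]

lemma map_integrable {X : Ω → ℝ} (hX : Measurable X) {m : Measure ℝ}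
    (hm : P.map X = m) {g : ℝ → ℝ} (hg : Measurable g) (h : Integrable g m) :
    Integrable (fun ω => g (X ω)) P := by
  rw [← hm] at h
  exact (integrable_map_measure hg.aestronglyMeasurable hX.aemeasurable).mp h

lemma map_ae_nonneg {X : Ω → ℝ} (hX : Measurable X) {m : Measure ℝ}
    (hm : P.map X = m) (h : ∀ᵐ x ∂m, 0 ≤ x) : ∀ᵐ ω ∂P, 0 ≤ X ω := by
  rw [← hm] at h
  exact (ae_map_iff hX.aemeasurable measurableSet_Ici).mp h

end Helpers



/-- mean and variance of the single-imputation mean estimator under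
posterior-draw imputation
`μ̂_SI,PD = μ + σ·(Z̄_obs + (n_mis/n)·√(U_obs/U_PD)·(Z_PD + Z̄_imp))`. -/
theorem stmt6
    {Ω : Type*} [MeasurableSpace Ω] (P : Measure Ω) [IsProbabilityMeasure P]
    (μ σ : ℝ) (hσ : 0 < σ)
    (n_obs n_mis : ℕ) (hnobs : 2 ≤ n_obs) (hnmis : 2 ≤ n_mis)
    (ν_prior : ℝ) (hνPD : 0 < (n_obs : ℝ) - 1 + ν_prior)
    (U_obs Z_obs U_PD Z_PD Z_imp U_imp : Ω → ℝ)
    (hUmeas : Measurable U_obs) (hZmeas : Measurable Z_obs)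
    (hUPDmeas : Measurable U_PD) (hZPDmeas : Measurable Z_PD)
    (hZimpmeas : Measurable Z_imp) (hUimpmeas : Measurable U_imp)
    (hU : P.map U_obs = gammaMeasure (((n_obs : ℝ) - 1) / 2) (1 / 2))
    (hZ : P.map Z_obs = gaussianReal 0 (1 / (n_obs : ℝ≥0)))
    (hUPD : P.map U_PD = gammaMeasure (((n_obs : ℝ) - 1 + ν_prior) / 2) (1 / 2))
    (hZPD : P.map Z_PD = gaussianReal 0 (1 / (n_obs : ℝ≥0)))
    (hZimp : P.map Z_imp = gaussianReal 0 (1 / (n_mis : ℝ≥0)))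
    (hUimp : P.map U_imp = gammaMeasure (((n_mis : ℝ) - 1) / 2) (1 / 2))
    (hindep : iIndepFun
      ![U_obs, Z_obs, U_PD, Z_PD, Z_imp, U_imp] P) :
    ((n_obs : ℝ) - 1 + ν_prior > 1 →
      (∫ ω, μ + σ * (Z_obs ω
          + ((n_mis : ℝ) / ((n_obs : ℝ) + (n_mis : ℝ)))
              * Real.sqrt (U_obs ω / U_PD ω) * (Z_PD ω + Z_imp ω)) ∂P) = μ)
    ∧ ((n_obs : ℝ) - 1 + ν_prior > 2 →
      variance (fun ω => μ + σ * (Z_obs ω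
          + ((n_mis : ℝ) / ((n_obs : ℝ) + (n_mis : ℝ)))
              * Real.sqrt (U_obs ω / U_PD ω) * (Z_PD ω + Z_imp ω))) P
        = σ ^ 2 / (n_obs : ℝ)
            * (1 + (n_mis : ℝ) * ((n_obs : ℝ) - 1)
                / (((n_obs : ℝ) + (n_mis : ℝ)) * ((n_obs : ℝ) + ν_prior - 3)))) := by

  classical
  -- numeric prerequisites
  have h2r : (2:ℝ) ≤ (n_obs : ℝ) := by exact_mod_cast hnobs
  have h2m : (2:ℝ) ≤ (n_mis : ℝ) := by exact_mod_cast hnmis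
  have hno : (0:ℝ) < (n_obs : ℝ) := by linarith
  have hnm : (0:ℝ) < (n_mis : ℝ) := by linarith
  have hv1 : (1 / (n_obs : ℝ≥0)) ≠ 0 :=
    one_div_ne_zero (Nat.cast_ne_zero.mpr (by omega))
  have hv2 : (1 / (n_mis : ℝ≥0)) ≠ 0 :=
    one_div_ne_zero (Nat.cast_ne_zero.mpr (by omega))
  have hv1R : ((1 / (n_obs : ℝ≥0) : ℝ≥0) : ℝ) = (n_obs:ℝ)⁻¹ := by push_cast; ring
  have hv2R : ((1 / (n_mis : ℝ≥0) : ℝ≥0) : ℝ) = (n_mis:ℝ)⁻¹ := by push_cast; ring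
  have ha1 : 0 < ((n_obs:ℝ) - 1) / 2 := by linarith
  have ha2 : 0 < ((n_obs:ℝ) - 1 + ν_prior) / 2 := by linarith
  have hr : (0:ℝ) < 1/2 := by norm_num
  -- a.e. nonnegativity
  have hU0 : ∀ᵐ ω ∂P, 0 ≤ U_obs ω := map_ae_nonneg hUmeas hU ae_nonneg_gammaMeasure
  have hV0 : ∀ᵐ ω ∂P, 0 ≤ U_PD ω := map_ae_nonneg hUPDmeas hUPD ae_nonneg_gammaMeasure
  -- measurability
  have msqrt : Measurable Real.sqrt := Real.continuous_sqrt.measurable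
  have mS : Measurable (fun ω => Real.sqrt (U_obs ω / U_PD ω)) :=
    msqrt.comp (hUmeas.div hUPDmeas)
  have mT : Measurable (fun ω => Z_PD ω + Z_imp ω) := hZPDmeas.add hZimpmeas
  have hmeasv : ∀ i, Measurable (![U_obs, Z_obs, U_PD, Z_PD, Z_imp, U_imp] i) := by
    intro i; fin_cases i <;> assumption
  -- independence
  have indAB : IndepFun (fun ω => Real.sqrt (U_obs ω))
      (fun ω => (Real.sqrt (U_PD ω))⁻¹) P := by
    have h : IndepFun U_obs U_PD P := hindep.indepFun (show (0:Fin 6) ≠ 2 by decide)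
    exact h.comp msqrt msqrt.inv
  have indUVinv : IndepFun U_obs (fun ω => (U_PD ω)⁻¹) P := by
    have h : IndepFun U_obs U_PD P := hindep.indepFun (show (0:Fin 6) ≠ 2 by decide)
    exact h.comp measurable_id measurable_inv
  have ind34 : IndepFun Z_PD Z_imp P := hindep.indepFun (show (3:Fin 6) ≠ 4 by decide)
  have indST : IndepFun (fun ω => Real.sqrt (U_obs ω / U_PD ω))
      (fun ω => Z_PD ω + Z_imp ω) P := by
    have h := hindep.indepFun_prodMk_prodMk hmeasv 0 2 3 4
      (by decide) (by decide) (by decide) (by decide)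
    exact h.comp (φ := fun p : ℝ × ℝ => Real.sqrt (p.1 / p.2))
      (ψ := fun p : ℝ × ℝ => p.1 + p.2)
      (msqrt.comp (measurable_fst.div measurable_snd))
      (measurable_fst.add measurable_snd)
  have indSTZ : IndepFun
      (fun ω => Real.sqrt (U_obs ω / U_PD ω) * (Z_PD ω + Z_imp ω)) Z_obs P := by
    have h := hindep.indepFun_finset {0,2,3,4} {1} (by decide) hmeasv
    have hφL : Measurable (fun v : (({0,2,3,4} : Finset (Fin 6)) → ℝ) =>
        Real.sqrt (v ⟨0, by decide⟩ / v ⟨2, by decide⟩)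
          * (v ⟨3, by decide⟩ + v ⟨4, by decide⟩)) := by
      apply Measurable.mul
      · exact msqrt.comp ((measurable_pi_apply _).div (measurable_pi_apply _))
      · exact (measurable_pi_apply _).add (measurable_pi_apply _)
    have hφR : Measurable (fun v : (({1} : Finset (Fin 6)) → ℝ) => v ⟨1, by decide⟩) :=
      measurable_pi_apply _
    exact h.comp hφL hφR
  -- basic gaussian integrability and expectations
  have iZobs : Integrable Z_obs P :=
    map_integrable hZmeas hZ measurable_id (integrable_id_gaussian hv1)
  have iZPD : Integrable Z_PD P :=
    map_integrable hZPDmeas hZPD measurable_id (integrable_id_gaussian hv1)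
  have iZimp : Integrable Z_imp P :=
    map_integrable hZimpmeas hZimp measurable_id (integrable_id_gaussian hv2)
  have EZobs : ∫ ω, Z_obs ω ∂P = 0 :=
    (map_integral hZmeas hZ (g := fun x => x) measurable_id).trans (integral_id_gaussian _)
  have EZPD : ∫ ω, Z_PD ω ∂P = 0 :=
    (map_integral hZPDmeas hZPD (g := fun x => x) measurable_id).trans (integral_id_gaussian _)
  have EZimp : ∫ ω, Z_imp ω ∂P = 0 :=
    (map_integral hZimpmeas hZimp (g := fun x => x) measurable_id).trans (integral_id_gaussian _)
  have ET : ∫ ω, (Z_PD ω + Z_imp ω) ∂P = 0 := by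
    rw [integral_add iZPD iZimp, EZPD, EZimp, add_zero]
  have EST : ∫ ω, Real.sqrt (U_obs ω / U_PD ω) * (Z_PD ω + Z_imp ω) ∂P = 0 := by
    have h := indST.integral_mul_eq_mul_integral mS.aestronglyMeasurable mT.aestronglyMeasurable
    exact h.trans (by rw [ET, mul_zero])
  -- square-root integrability of the numerator
  have sqrt_rpow : Real.sqrt = fun x : ℝ => x ^ ((1:ℝ)/2) :=
    funext Real.sqrt_eq_rpow
  have iA : Integrable (fun ω => Real.sqrt (U_obs ω)) P := by
    refine map_integrable hUmeas hU msqrt ?_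
    rw [sqrt_rpow]
    exact integrable_rpow_gammaMeasure ha1 hr (by linarith)
  -- integrability pack depending on ν_PD > 1
  have pack1 : ((n_obs:ℝ) - 1 + ν_prior > 1) →
      Integrable (fun ω => Real.sqrt (U_obs ω / U_PD ω) * (Z_PD ω + Z_imp ω)) P := by
    intro hν1
    have iB : Integrable (fun ω => (Real.sqrt (U_PD ω))⁻¹) P := by
      refine map_integrable hUPDmeas hUPD msqrt.inv ?_
      refine (integrable_rpow_gammaMeasure ha2 hr (p := -(1/2)) (by linarith)).congr ?_
      filter_upwards [ae_nonneg_gammaMeasure] with x hx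
      rw [Pi.inv_apply, Real.sqrt_eq_rpow, ← Real.rpow_neg hx]
    have iS : Integrable (fun ω => Real.sqrt (U_obs ω / U_PD ω)) P := by
      refine (indAB.integrable_mul iA iB).congr ?_
      filter_upwards [hU0] with ω h0
      simp only [Pi.mul_apply]
      rw [Real.sqrt_div h0, div_eq_mul_inv]
    exact indST.integrable_mul iS (iZPD.add iZimp)
  constructor
  · -- part 1 : the mean
    intro hν1
    have iST := pack1 hν1
    have hrw : (fun ω => μ + σ * (Z_obs ω
          + ((n_mis : ℝ) / ((n_obs : ℝ) + (n_mis : ℝ)))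
              * Real.sqrt (U_obs ω / U_PD ω) * (Z_PD ω + Z_imp ω)))
        = fun ω => μ + (σ * Z_obs ω
          + (σ * ((n_mis : ℝ) / ((n_obs : ℝ) + (n_mis : ℝ))))
            * (Real.sqrt (U_obs ω / U_PD ω) * (Z_PD ω + Z_imp ω))) :=
      funext fun ω => by ring
    have i1 : Integrable (fun ω => σ * Z_obs ω) P := iZobs.const_mul σ
    have i2 : Integrable (fun ω => (σ * ((n_mis : ℝ) / ((n_obs : ℝ) + (n_mis : ℝ))))
        * (Real.sqrt (U_obs ω / U_PD ω) * (Z_PD ω + Z_imp ω))) P := iST.const_mul _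
    have i12 : Integrable (fun ω => σ * Z_obs ω
        + (σ * ((n_mis : ℝ) / ((n_obs : ℝ) + (n_mis : ℝ))))
          * (Real.sqrt (U_obs ω / U_PD ω) * (Z_PD ω + Z_imp ω))) P := i1.add i2
    rw [hrw, integral_add (integrable_const μ) i12, integral_add i1 i2,
      integral_const_mul, integral_const_mul, EZobs, EST, integral_const]
    simp
  · -- part 2 : the variance
    intro hν2
    have hν1 : (n_obs:ℝ) - 1 + ν_prior > 1 := by linarith
    have iST := pack1 hν1
    have hd3 : (0:ℝ) < (n_obs:ℝ) + ν_prior - 3 := by linarith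
    -- second moments (gamma side)
    have iU : Integrable U_obs P := by
      refine map_integrable hUmeas hU measurable_id ?_
      have h := integrable_rpow_gammaMeasure ha1 hr (p := 1) (by linarith)
      refine h.congr (Filter.Eventually.of_forall fun x => ?_)
      simp [Real.rpow_one]
    have iVinv : Integrable (fun ω => (U_PD ω)⁻¹) P := by
      refine map_integrable hUPDmeas hUPD measurable_inv ?_
      have h := integrable_rpow_gammaMeasure ha2 hr (p := -1) (by linarith)
      refine h.congr (Filter.Eventually.of_forall fun x => ?_)
      simp [Real.rpow_neg_one]
    have EU : ∫ ω, U_obs ω ∂P = (n_obs:ℝ) - 1 := by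
      rw [map_integral hUmeas hU (g := fun x => x) measurable_id]
      have h1 : ∫ x, x ∂(gammaMeasure (((n_obs:ℝ) - 1)/2) (1/2))
          = ∫ x, x ^ (1:ℝ) ∂(gammaMeasure (((n_obs:ℝ) - 1)/2) (1/2)) :=
        integral_congr_ae (Filter.Eventually.of_forall fun x => (Real.rpow_one x).symm)
      rw [h1, integral_rpow_gammaMeasure ha1 hr (by linarith), Real.rpow_one,
        Real.Gamma_add_one ha1.ne']
      have hΓ : Real.Gamma (((n_obs:ℝ) - 1)/2) ≠ 0 := (Real.Gamma_pos_of_pos ha1).ne'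
      field_simp
    have EVinv : ∫ ω, (U_PD ω)⁻¹ ∂P = ((n_obs:ℝ) + ν_prior - 3)⁻¹ := by
      rw [map_integral hUPDmeas hUPD (g := fun x => x⁻¹) measurable_inv]
      have h1 : ∫ x, x⁻¹ ∂(gammaMeasure (((n_obs:ℝ) - 1 + ν_prior)/2) (1/2))
          = ∫ x, x ^ (-1:ℝ) ∂(gammaMeasure (((n_obs:ℝ) - 1 + ν_prior)/2) (1/2)) :=
        integral_congr_ae (Filter.Eventually.of_forall fun x => (Real.rpow_neg_one x).symm)
      rw [h1, integral_rpow_gammaMeasure ha2 hr (by linarith), Real.rpow_neg_one]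
      have hb : (0:ℝ) < ((n_obs:ℝ) - 1 + ν_prior)/2 - 1 := by linarith
      have hΓ' : Real.Gamma (((n_obs:ℝ) - 1 + ν_prior)/2)
          = (((n_obs:ℝ) - 1 + ν_prior)/2 - 1)
            * Real.Gamma (((n_obs:ℝ) - 1 + ν_prior)/2 - 1) := by
        rw [← Real.Gamma_add_one hb.ne', sub_add_cancel]
      rw [show ((n_obs:ℝ) - 1 + ν_prior)/2 + -1 = ((n_obs:ℝ) - 1 + ν_prior)/2 - 1 by ring, hΓ']
      have hΓpos : (0:ℝ) < Real.Gamma (((n_obs:ℝ) - 1 + ν_prior)/2 - 1) :=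
        Real.Gamma_pos_of_pos hb
      rw [show (((n_obs:ℝ) - 1 + ν_prior)/2 - 1)
            * Real.Gamma (((n_obs:ℝ) - 1 + ν_prior)/2 - 1) * ((1:ℝ)/2)⁻¹
          = Real.Gamma (((n_obs:ℝ) - 1 + ν_prior)/2 - 1) * ((n_obs:ℝ) + ν_prior - 3) by ring,
        div_mul_eq_div_div, div_self hΓpos.ne', one_div]
    -- gaussian second moments
    have iZ2 : Integrable (fun ω => Z_obs ω ^ 2) P :=
      map_integrable hZmeas hZ (measurable_id.pow_const 2) (integrable_pow_gaussian hv1 2)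
    have iZPD2 : Integrable (fun ω => Z_PD ω ^ 2) P :=
      map_integrable hZPDmeas hZPD (measurable_id.pow_const 2) (integrable_pow_gaussian hv1 2)
    have iZimp2 : Integrable (fun ω => Z_imp ω ^ 2) P :=
      map_integrable hZimpmeas hZimp (measurable_id.pow_const 2) (integrable_pow_gaussian hv2 2)
    have EZ2 : ∫ ω, Z_obs ω ^ 2 ∂P = (n_obs:ℝ)⁻¹ := by
      rw [map_integral hZmeas hZ (g := fun x => x ^ 2) (measurable_id.pow_const 2),
        integral_sq_gaussian hv1, hv1R]
    have EZPD2 : ∫ ω, Z_PD ω ^ 2 ∂P = (n_obs:ℝ)⁻¹ := by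
      rw [map_integral hZPDmeas hZPD (g := fun x => x ^ 2) (measurable_id.pow_const 2),
        integral_sq_gaussian hv1, hv1R]
    have EZimp2 : ∫ ω, Z_imp ω ^ 2 ∂P = (n_mis:ℝ)⁻¹ := by
      rw [map_integral hZimpmeas hZimp (g := fun x => x ^ 2) (measurable_id.pow_const 2),
        integral_sq_gaussian hv2, hv2R]
    have iCross : Integrable (fun ω => Z_PD ω * Z_imp ω) P :=
      ind34.integrable_mul iZPD iZimp
    have Ecross : ∫ ω, Z_PD ω * Z_imp ω ∂P = 0 := by
      have h := ind34.integral_mul_eq_mul_integral hZPDmeas.aestronglyMeasurable hZimpmeas.aestronglyMeasurable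
      exact h.trans (by rw [EZPD, zero_mul])
    have hT2rw : (fun ω => (Z_PD ω + Z_imp ω) ^ 2)
        = fun ω => Z_PD ω ^ 2 + (2 * (Z_PD ω * Z_imp ω) + Z_imp ω ^ 2) :=
      funext fun ω => by ring
    have j1 : Integrable (fun ω => 2 * (Z_PD ω * Z_imp ω)) P := iCross.const_mul 2
    have j12 : Integrable (fun ω => 2 * (Z_PD ω * Z_imp ω) + Z_imp ω ^ 2) P := j1.add iZimp2
    have iT2 : Integrable (fun ω => (Z_PD ω + Z_imp ω) ^ 2) P := by
      rw [hT2rw]; exact iZPD2.add j12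
    have ET2 : ∫ ω, (Z_PD ω + Z_imp ω) ^ 2 ∂P = (n_obs:ℝ)⁻¹ + (n_mis:ℝ)⁻¹ := by
      rw [hT2rw, integral_add iZPD2 j12, integral_add j1 iZimp2,
        integral_const_mul, Ecross, EZPD2, EZimp2]
      ring
    -- S² facts
    have hS2ae : (fun ω => U_obs ω * (U_PD ω)⁻¹)
        =ᵐ[P] fun ω => (Real.sqrt (U_obs ω / U_PD ω)) ^ 2 := by
      filter_upwards [hU0, hV0] with ω h0 h1
      rw [Real.sq_sqrt (div_nonneg h0 h1), div_eq_mul_inv]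
    have iS2 : Integrable (fun ω => (Real.sqrt (U_obs ω / U_PD ω)) ^ 2) P :=
      (indUVinv.integrable_mul iU iVinv).congr hS2ae
    have ES2 : ∫ ω, (Real.sqrt (U_obs ω / U_PD ω)) ^ 2 ∂P
        = ((n_obs:ℝ) - 1) * ((n_obs:ℝ) + ν_prior - 3)⁻¹ := by
      rw [← integral_congr_ae hS2ae]
      have h2 : ∫ ω, U_obs ω * (U_PD ω)⁻¹ ∂P
          = (∫ ω, U_obs ω ∂P) * ∫ ω, (U_PD ω)⁻¹ ∂P :=
        indUVinv.integral_mul_eq_mul_integral hUmeas.aestronglyMeasurable hUPDmeas.inv.aestronglyMeasurable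
      rw [h2, EU, EVinv]
    -- (S T)² facts
    have indST2 : IndepFun (fun ω => (Real.sqrt (U_obs ω / U_PD ω)) ^ 2)
        (fun ω => (Z_PD ω + Z_imp ω) ^ 2) P :=
      indST.comp (measurable_id.pow_const 2) (measurable_id.pow_const 2)
    have iST2 : Integrable
        (fun ω => (Real.sqrt (U_obs ω / U_PD ω) * (Z_PD ω + Z_imp ω)) ^ 2) P := by
      refine (indST2.integrable_mul iS2 iT2).congr ?_
      refine Filter.Eventually.of_forall fun ω => ?_
      simp [mul_pow]
    have ES2T2 : ∫ ω, (Real.sqrt (U_obs ω / U_PD ω) * (Z_PD ω + Z_imp ω)) ^ 2 ∂P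
        = (((n_obs:ℝ) - 1) * ((n_obs:ℝ) + ν_prior - 3)⁻¹)
          * ((n_obs:ℝ)⁻¹ + (n_mis:ℝ)⁻¹) := by
      have h0 : ∫ ω, (Real.sqrt (U_obs ω / U_PD ω) * (Z_PD ω + Z_imp ω)) ^ 2 ∂P
          = ∫ ω, (Real.sqrt (U_obs ω / U_PD ω)) ^ 2 * (Z_PD ω + Z_imp ω) ^ 2 ∂P :=
        integral_congr_ae (Filter.Eventually.of_forall fun ω => by simp [mul_pow])
      have h1 : ∫ ω, (Real.sqrt (U_obs ω / U_PD ω)) ^ 2 * (Z_PD ω + Z_imp ω) ^ 2 ∂P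
          = (∫ ω, (Real.sqrt (U_obs ω / U_PD ω)) ^ 2 ∂P)
            * ∫ ω, (Z_PD ω + Z_imp ω) ^ 2 ∂P :=
        indST2.integral_mul_eq_mul_integral (mS.pow_const 2).aestronglyMeasurable
          (mT.pow_const 2).aestronglyMeasurable
      rw [h0, h1, ES2, ET2]
    have iZST : Integrable
        (fun ω => Real.sqrt (U_obs ω / U_PD ω) * (Z_PD ω + Z_imp ω) * Z_obs ω) P :=
      indSTZ.integrable_mul iST iZobs
    have EZST : ∫ ω, Real.sqrt (U_obs ω / U_PD ω) * (Z_PD ω + Z_imp ω) * Z_obs ω ∂P = 0 := by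
      have h : ∫ ω, Real.sqrt (U_obs ω / U_PD ω) * (Z_PD ω + Z_imp ω) * Z_obs ω ∂P
          = (∫ ω, Real.sqrt (U_obs ω / U_PD ω) * (Z_PD ω + Z_imp ω) ∂P)
            * ∫ ω, Z_obs ω ∂P :=
        indSTZ.integral_mul_eq_mul_integral (mS.mul mT).aestronglyMeasurable hZmeas.aestronglyMeasurable
      rw [h, EZobs, mul_zero]
    -- MemLp
    have memZ : MemLp Z_obs 2 P :=
      (memLp_two_iff_integrable_sq hZmeas.aestronglyMeasurable).mpr iZ2
    have memST : MemLp (fun ω => Real.sqrt (U_obs ω / U_PD ω) * (Z_PD ω + Z_imp ω)) 2 P :=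
      (memLp_two_iff_integrable_sq (mS.mul mT).aestronglyMeasurable).mpr iST2
    have hXeq : (fun ω => μ + σ * (Z_obs ω
          + ((n_mis : ℝ) / ((n_obs : ℝ) + (n_mis : ℝ)))
              * Real.sqrt (U_obs ω / U_PD ω) * (Z_PD ω + Z_imp ω)))
        = fun ω => (μ + σ * Z_obs ω)
            + (σ * ((n_mis : ℝ) / ((n_obs : ℝ) + (n_mis : ℝ))))
              * (Real.sqrt (U_obs ω / U_PD ω) * (Z_PD ω + Z_imp ω)) :=
      funext fun ω => by ring
    have memX : MemLp (fun ω => (μ + σ * Z_obs ω)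
        + (σ * ((n_mis : ℝ) / ((n_obs : ℝ) + (n_mis : ℝ))))
          * (Real.sqrt (U_obs ω / U_PD ω) * (Z_PD ω + Z_imp ω))) 2 P :=
      ((memLp_const μ).add (memZ.const_mul σ)).add (memST.const_mul _)
    rw [hXeq, variance_eq_sub memX]
    -- the mean is μ
    have hEX : ∫ ω, ((μ + σ * Z_obs ω)
        + (σ * ((n_mis : ℝ) / ((n_obs : ℝ) + (n_mis : ℝ))))
          * (Real.sqrt (U_obs ω / U_PD ω) * (Z_PD ω + Z_imp ω))) ∂P = μ := by
      have hrw2 : (fun ω => (μ + σ * Z_obs ω)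
          + (σ * ((n_mis : ℝ) / ((n_obs : ℝ) + (n_mis : ℝ))))
            * (Real.sqrt (U_obs ω / U_PD ω) * (Z_PD ω + Z_imp ω)))
          = fun ω => μ + (σ * Z_obs ω
            + (σ * ((n_mis : ℝ) / ((n_obs : ℝ) + (n_mis : ℝ))))
              * (Real.sqrt (U_obs ω / U_PD ω) * (Z_PD ω + Z_imp ω))) :=
        funext fun ω => by ring
      have i1 : Integrable (fun ω => σ * Z_obs ω) P := iZobs.const_mul σ
      have i2 : Integrable (fun ω => (σ * ((n_mis : ℝ) / ((n_obs : ℝ) + (n_mis : ℝ))))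
          * (Real.sqrt (U_obs ω / U_PD ω) * (Z_PD ω + Z_imp ω))) P := iST.const_mul _
      have i12 : Integrable (fun ω => σ * Z_obs ω
          + (σ * ((n_mis : ℝ) / ((n_obs : ℝ) + (n_mis : ℝ))))
            * (Real.sqrt (U_obs ω / U_PD ω) * (Z_PD ω + Z_imp ω))) P := i1.add i2
      rw [hrw2, integral_add (integrable_const μ) i12, integral_add i1 i2,
        integral_const_mul, integral_const_mul, EZobs, EST, integral_const]
      simp
    -- the second moment
    have hX2eq : (fun ω => ((μ + σ * Z_obs ω)
          + (σ * ((n_mis : ℝ) / ((n_obs : ℝ) + (n_mis : ℝ))))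
            * (Real.sqrt (U_obs ω / U_PD ω) * (Z_PD ω + Z_imp ω))) ^ 2)
        = fun ω => μ ^ 2 + (σ ^ 2 * Z_obs ω ^ 2
          + ((σ * ((n_mis : ℝ) / ((n_obs : ℝ) + (n_mis : ℝ)))) ^ 2
              * (Real.sqrt (U_obs ω / U_PD ω) * (Z_PD ω + Z_imp ω)) ^ 2
            + (2 * μ * σ * Z_obs ω
              + (2 * μ * (σ * ((n_mis : ℝ) / ((n_obs : ℝ) + (n_mis : ℝ))))
                  * (Real.sqrt (U_obs ω / U_PD ω) * (Z_PD ω + Z_imp ω))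
                + (2 * σ * (σ * ((n_mis : ℝ) / ((n_obs : ℝ) + (n_mis : ℝ)))))
                    * (Real.sqrt (U_obs ω / U_PD ω) * (Z_PD ω + Z_imp ω) * Z_obs ω))))) :=
      funext fun ω => by ring
    have hEX2 : ∫ ω, ((μ + σ * Z_obs ω)
        + (σ * ((n_mis : ℝ) / ((n_obs : ℝ) + (n_mis : ℝ))))
          * (Real.sqrt (U_obs ω / U_PD ω) * (Z_PD ω + Z_imp ω))) ^ 2 ∂P
        = μ ^ 2 + σ ^ 2 * (n_obs:ℝ)⁻¹
          + (σ * ((n_mis : ℝ) / ((n_obs : ℝ) + (n_mis : ℝ)))) ^ 2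
            * ((((n_obs:ℝ) - 1) * ((n_obs:ℝ) + ν_prior - 3)⁻¹)
              * ((n_obs:ℝ)⁻¹ + (n_mis:ℝ)⁻¹)) := by
      have k2 : Integrable (fun ω => σ ^ 2 * Z_obs ω ^ 2) P := iZ2.const_mul _
      have k3 : Integrable (fun ω => (σ * ((n_mis : ℝ) / ((n_obs : ℝ) + (n_mis : ℝ)))) ^ 2
          * (Real.sqrt (U_obs ω / U_PD ω) * (Z_PD ω + Z_imp ω)) ^ 2) P := iST2.const_mul _
      have k4 : Integrable (fun ω => 2 * μ * σ * Z_obs ω) P := iZobs.const_mul _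
      have k5 : Integrable (fun ω => 2 * μ * (σ * ((n_mis : ℝ) / ((n_obs : ℝ) + (n_mis : ℝ))))
          * (Real.sqrt (U_obs ω / U_PD ω) * (Z_PD ω + Z_imp ω))) P := iST.const_mul _
      have k6 : Integrable (fun ω =>
          (2 * σ * (σ * ((n_mis : ℝ) / ((n_obs : ℝ) + (n_mis : ℝ)))))
            * (Real.sqrt (U_obs ω / U_PD ω) * (Z_PD ω + Z_imp ω) * Z_obs ω)) P :=
        iZST.const_mul _
      have k56 : Integrable (fun ω =>
          2 * μ * (σ * ((n_mis : ℝ) / ((n_obs : ℝ) + (n_mis : ℝ))))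
            * (Real.sqrt (U_obs ω / U_PD ω) * (Z_PD ω + Z_imp ω))
          + (2 * σ * (σ * ((n_mis : ℝ) / ((n_obs : ℝ) + (n_mis : ℝ)))))
              * (Real.sqrt (U_obs ω / U_PD ω) * (Z_PD ω + Z_imp ω) * Z_obs ω)) P := k5.add k6
      have k456 : Integrable (fun ω => 2 * μ * σ * Z_obs ω
          + (2 * μ * (σ * ((n_mis : ℝ) / ((n_obs : ℝ) + (n_mis : ℝ))))
              * (Real.sqrt (U_obs ω / U_PD ω) * (Z_PD ω + Z_imp ω))
            + (2 * σ * (σ * ((n_mis : ℝ) / ((n_obs : ℝ) + (n_mis : ℝ)))))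
                * (Real.sqrt (U_obs ω / U_PD ω) * (Z_PD ω + Z_imp ω) * Z_obs ω))) P :=
        k4.add k56
      have k3456 : Integrable (fun ω =>
          (σ * ((n_mis : ℝ) / ((n_obs : ℝ) + (n_mis : ℝ)))) ^ 2
            * (Real.sqrt (U_obs ω / U_PD ω) * (Z_PD ω + Z_imp ω)) ^ 2
          + (2 * μ * σ * Z_obs ω
            + (2 * μ * (σ * ((n_mis : ℝ) / ((n_obs : ℝ) + (n_mis : ℝ))))
                * (Real.sqrt (U_obs ω / U_PD ω) * (Z_PD ω + Z_imp ω))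
              + (2 * σ * (σ * ((n_mis : ℝ) / ((n_obs : ℝ) + (n_mis : ℝ)))))
                  * (Real.sqrt (U_obs ω / U_PD ω) * (Z_PD ω + Z_imp ω) * Z_obs ω)))) P :=
        k3.add k456
      have k23456 : Integrable (fun ω => σ ^ 2 * Z_obs ω ^ 2
          + ((σ * ((n_mis : ℝ) / ((n_obs : ℝ) + (n_mis : ℝ)))) ^ 2
              * (Real.sqrt (U_obs ω / U_PD ω) * (Z_PD ω + Z_imp ω)) ^ 2
            + (2 * μ * σ * Z_obs ω
              + (2 * μ * (σ * ((n_mis : ℝ) / ((n_obs : ℝ) + (n_mis : ℝ))))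
                  * (Real.sqrt (U_obs ω / U_PD ω) * (Z_PD ω + Z_imp ω))
                + (2 * σ * (σ * ((n_mis : ℝ) / ((n_obs : ℝ) + (n_mis : ℝ)))))
                    * (Real.sqrt (U_obs ω / U_PD ω) * (Z_PD ω + Z_imp ω) * Z_obs ω))))) P :=
        k2.add k3456
      rw [hX2eq, integral_add (integrable_const _) k23456, integral_add k2 k3456,
        integral_add k3 k456, integral_add k4 k56, integral_add k5 k6,
        integral_const_mul, integral_const_mul, integral_const_mul, integral_const_mul,
        integral_const_mul, integral_const, EZ2, ES2T2, EZobs, EST, EZST]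
      simp only [measure_univ, probReal_univ, ENNReal.toReal_one, smul_eq_mul, one_mul, mul_zero, add_zero]
      ring
    rw [show ((fun ω => (μ + σ * Z_obs ω)
        + (σ * ((n_mis : ℝ) / ((n_obs : ℝ) + (n_mis : ℝ))))
          * (Real.sqrt (U_obs ω / U_PD ω) * (Z_PD ω + Z_imp ω))) ^ 2)
        = fun ω => ((μ + σ * Z_obs ω)
        + (σ * ((n_mis : ℝ) / ((n_obs : ℝ) + (n_mis : ℝ))))
          * (Real.sqrt (U_obs ω / U_PD ω) * (Z_PD ω + Z_imp ω))) ^ 2 from rfl,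
      hEX2, hEX]
    field_simp
    ring
end

section
/- Define the single-imputation variance estimator under posterior-draw imputation σ̂²_SI,PD = σ²·(U_obs/(n − 1))·(1 + (U_imp + (n_mis·n_obs/n)·(Z̄_imp + Z_PD)²)/U_PD). If ν_PD > 2 then E[σ̂²_SI,PD] − σ² = −σ²·n_mis·(ν_prior − 2)/((n − 1)·(n_obs + ν_prior − 3)); in particular σ̂²_SI,PD is unbiased if and only if ν_prior = 2. -/
open MeasureTheory ProbabilityTheory Real Set
open scoped ENNReal NNReal

section helpers
variable {g p : ℝ → ℝ}

lemma integral_wd (hp : Measurable p) (hpn : ∀ x, 0 ≤ p x) (g : ℝ → ℝ) :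
    ∫ x, g x ∂(volume.withDensity (fun x => ENNReal.ofReal (p x))) = ∫ x, p x * g x := by
  have h1 : (fun x => ENNReal.ofReal (p x)) = (fun x => ((p x).toNNReal : ℝ≥0∞)) := rfl
  rw [h1, integral_withDensity_eq_integral_smul hp.real_toNNReal]
  congr 1 with x
  simp [NNReal.smul_def, Real.coe_toNNReal _ (hpn x)]

lemma integrable_wd (hp : Measurable p) (hpn : ∀ x, 0 ≤ p x) (g : ℝ → ℝ) :
    Integrable g (volume.withDensity (fun x => ENNReal.ofReal (p x)))
      ↔ Integrable (fun x => p x * g x) volume := by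
  have h1 : (fun x => ENNReal.ofReal (p x)) = (fun x => ((p x).toNNReal : ℝ≥0∞)) := rfl
  rw [h1, integrable_withDensity_iff_integrable_smul hp.real_toNNReal]
  constructor <;> intro h <;> refine h.congr (Filter.Eventually.of_forall fun x => ?_) <;>
    simp [NNReal.smul_def, Real.coe_toNNReal _ (hpn x)]

end helpers

namespace ProbabilityTheory

lemma gammaMeasure_eq (a r : ℝ) :
    gammaMeasure a r = volume.withDensity (fun x => ENNReal.ofReal (gammaPDFReal a r x)) := rfl

lemma integrable_gammaPDFReal {a r : ℝ} (ha : 0 < a) (hr : 0 < r) :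
    Integrable (gammaPDFReal a r) volume := by
  refine ⟨(measurable_gammaPDFReal a r).aestronglyMeasurable, ?_⟩
  rw [hasFiniteIntegral_iff_ofReal (Filter.Eventually.of_forall (gammaPDFReal_nonneg ha hr))]
  rw [show (fun x => ENNReal.ofReal (gammaPDFReal a r x)) = gammaPDF a r from rfl]
  simp [lintegral_gammaPDF_eq_one ha hr]

lemma integral_gammaPDFReal_eq_one {a r : ℝ} (ha : 0 < a) (hr : 0 < r) :
    ∫ x, gammaPDFReal a r x = 1 := by
  rw [integral_eq_lintegral_of_nonneg_ae
    (Filter.Eventually.of_forall (gammaPDFReal_nonneg ha hr))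
    (measurable_gammaPDFReal a r).aestronglyMeasurable]
  rw [show (fun x => ENNReal.ofReal (gammaPDFReal a r x)) = gammaPDF a r from rfl]
  simp [lintegral_gammaPDF_eq_one ha hr]

lemma gammaPDFReal_mul_self {a r : ℝ} (ha : 0 < a) (hr : 0 < r) (x : ℝ) :
    gammaPDFReal a r x * x = (a / r) * gammaPDFReal (a + 1) r x := by
  unfold gammaPDFReal
  rcases lt_trichotomy x 0 with hx | hx | hx
  · rw [if_neg (by linarith), if_neg (by linarith)]; ring
  · subst hx
    rw [if_pos le_rfl, if_pos le_rfl]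
    rw [show (a + 1 - 1 : ℝ) = a from by ring, Real.zero_rpow ha.ne']
    ring
  · rw [if_pos hx.le, if_pos hx.le]
    have h1 : x ^ (a + 1 - 1) = x ^ (a - 1) * x := by
      rw [show (a + 1 - 1 : ℝ) = (a - 1) + 1 from by ring, Real.rpow_add_one hx.ne']
    have h2 : r ^ (a + 1) = r ^ a * r := by rw [Real.rpow_add_one hr.ne']
    rw [Real.Gamma_add_one ha.ne', h1, h2]
    have hΓ : Real.Gamma a ≠ 0 := (Real.Gamma_pos_of_pos ha).ne'
    field_simp

lemma gammaPDFReal_mul_inv {a r : ℝ} (ha : 1 < a) (hr : 0 < r) {x : ℝ} (hx : x ≠ 0) :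
    gammaPDFReal a r x * x⁻¹ = (r / (a - 1)) * gammaPDFReal (a - 1) r x := by
  unfold gammaPDFReal
  rcases lt_or_gt_of_ne hx with hx' | hx'
  · rw [if_neg (by linarith), if_neg (by linarith)]; ring
  · rw [if_pos hx'.le, if_pos hx'.le]
    have h1 : x ^ (a - 1) * x⁻¹ = x ^ (a - 1 - 1) := by
      rw [← Real.rpow_neg_one x, ← Real.rpow_add hx']; ring_nf
    have h2 : r ^ a = r ^ (a - 1) * r := by
      rw [← Real.rpow_add_one hr.ne']; ring_nf
    have hΓ : Real.Gamma a = (a - 1) * Real.Gamma (a - 1) := by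
      rw [show a = (a - 1) + 1 from by ring, Real.Gamma_add_one (by linarith)]
      ring_nf
    have hΓ1 : Real.Gamma (a - 1) ≠ 0 := (Real.Gamma_pos_of_pos (by linarith)).ne'
    calc r ^ a / Real.Gamma a * x ^ (a - 1) * Real.exp (-(r * x)) * x⁻¹
        = r ^ a / Real.Gamma a * (x ^ (a - 1) * x⁻¹) * Real.exp (-(r * x)) := by ring
      _ = r ^ a / Real.Gamma a * x ^ (a - 1 - 1) * Real.exp (-(r * x)) := by rw [h1]
      _ = r / (a - 1) * (r ^ (a - 1) / Real.Gamma (a - 1) * x ^ (a - 1 - 1)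
            * Real.exp (-(r * x))) := by
          rw [h2, hΓ]; field_simp

lemma integrable_id_gammaMeasure {a r : ℝ} (ha : 0 < a) (hr : 0 < r) :
    Integrable id (gammaMeasure a r) := by
  rw [gammaMeasure_eq, integrable_wd (measurable_gammaPDFReal a r) (gammaPDFReal_nonneg ha hr)]
  have : (fun x => gammaPDFReal a r x * id x) = fun x => (a / r) * gammaPDFReal (a + 1) r x := by
    funext x; exact gammaPDFReal_mul_self ha hr x
  rw [this]
  exact (integrable_gammaPDFReal (by linarith) hr).const_mul _

lemma integral_id_gammaMeasure {a r : ℝ} (ha : 0 < a) (hr : 0 < r) :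
    ∫ x, x ∂(gammaMeasure a r) = a / r := by
  rw [gammaMeasure_eq, integral_wd (measurable_gammaPDFReal a r) (gammaPDFReal_nonneg ha hr)]
  have : (fun x => gammaPDFReal a r x * x) = fun x => (a / r) * gammaPDFReal (a + 1) r x := by
    funext x; exact gammaPDFReal_mul_self ha hr x
  rw [this, integral_const_mul, integral_gammaPDFReal_eq_one (by linarith) hr, mul_one]

lemma ae_inv_eq {a r : ℝ} (ha : 1 < a) (hr : 0 < r) :
    (fun x => gammaPDFReal a r x * x⁻¹)
      =ᵐ[volume] fun x => (r / (a - 1)) * gammaPDFReal (a - 1) r x := by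
  have h0 : (volume : Measure ℝ) {0} = 0 := measure_singleton 0
  rw [Filter.eventuallyEq_iff_exists_mem]
  exact ⟨{0}ᶜ, compl_mem_ae_iff.mpr h0, fun x hx => gammaPDFReal_mul_inv ha hr hx⟩

lemma integrable_inv_gammaMeasure {a r : ℝ} (ha : 1 < a) (hr : 0 < r) :
    Integrable (fun x => x⁻¹) (gammaMeasure a r) := by
  rw [gammaMeasure_eq,
    integrable_wd (measurable_gammaPDFReal a r) (gammaPDFReal_nonneg (by linarith) hr)]
  exact (((integrable_gammaPDFReal (by linarith : (0:ℝ) < a - 1) hr).const_mul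
    (r / (a - 1))).congr (ae_inv_eq ha hr).symm)

lemma integral_inv_gammaMeasure {a r : ℝ} (ha : 1 < a) (hr : 0 < r) :
    ∫ x, x⁻¹ ∂(gammaMeasure a r) = r / (a - 1) := by
  rw [gammaMeasure_eq, integral_wd (measurable_gammaPDFReal a r)
    (gammaPDFReal_nonneg (by linarith) hr), integral_congr_ae (ae_inv_eq ha hr),
    integral_const_mul, integral_gammaPDFReal_eq_one (by linarith) hr, mul_one]

end ProbabilityTheory

namespace ProbabilityTheory

lemma rpow_two_eq (x : ℝ) : x ^ (2:ℝ) = x ^ 2 := by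
  rw [show (2:ℝ) = ((2:ℕ):ℝ) from by norm_num, Real.rpow_natCast]

lemma gaussianReal_zero_eq {v : ℝ≥0} (hv : v ≠ 0) :
    gaussianReal 0 v
      = volume.withDensity (fun x => ENNReal.ofReal (gaussianPDFReal 0 v x)) := by
  rw [gaussianReal_of_var_ne_zero 0 hv]; rfl

lemma gaussianPDFReal_zero_eq {v : ℝ≥0} (x : ℝ) :
    gaussianPDFReal 0 v x
      = (Real.sqrt (2 * Real.pi * v))⁻¹ * Real.exp (-(2 * (v:ℝ))⁻¹ * x ^ 2) := by
  rw [gaussianPDFReal]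
  congr 1
  congr 1
  ring

lemma integrable_id_gaussianReal {v : ℝ≥0} (hv : v ≠ 0) :
    Integrable id (gaussianReal 0 v) := by
  have hvr : 0 < (v : ℝ) := by positivity
  have hb : 0 < (2 * (v:ℝ))⁻¹ := by positivity
  rw [gaussianReal_zero_eq hv,
    integrable_wd (measurable_gaussianPDFReal 0 v) (gaussianPDFReal_nonneg 0 v)]
  have h := (integrable_rpow_mul_exp_neg_mul_sq hb (by norm_num : (-1:ℝ) < 1)).const_mul
    ((Real.sqrt (2 * Real.pi * v))⁻¹)
  refine h.congr (Filter.Eventually.of_forall fun x => ?_)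
  simp only [gaussianPDFReal_zero_eq, Real.rpow_one, id_eq]
  ring

lemma integrable_sq_gaussianReal {v : ℝ≥0} (hv : v ≠ 0) :
    Integrable (fun x => x ^ 2) (gaussianReal 0 v) := by
  have hvr : 0 < (v : ℝ) := by positivity
  have hb : 0 < (2 * (v:ℝ))⁻¹ := by positivity
  rw [gaussianReal_zero_eq hv,
    integrable_wd (measurable_gaussianPDFReal 0 v) (gaussianPDFReal_nonneg 0 v)]
  have h := (integrable_rpow_mul_exp_neg_mul_sq hb (by norm_num : (-1:ℝ) < 2)).const_mul
    ((Real.sqrt (2 * Real.pi * v))⁻¹)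
  refine h.congr (Filter.Eventually.of_forall fun x => ?_)
  simp only [gaussianPDFReal_zero_eq, rpow_two_eq, id_eq]
  ring

lemma integral_sq_gaussianReal {v : ℝ≥0} (hv : v ≠ 0) :
    ∫ x, x ^ 2 ∂(gaussianReal 0 v) = v := by
  have hvr : 0 < (v : ℝ) := by positivity
  have hb : 0 < (2 * (v:ℝ))⁻¹ := by positivity
  rw [gaussianReal_zero_eq hv,
    integral_wd (measurable_gaussianPDFReal 0 v) (gaussianPDFReal_nonneg 0 v)]
  have hpt : (fun x : ℝ => gaussianPDFReal 0 v x * x ^ 2)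
      = fun x => (Real.sqrt (2 * Real.pi * v))⁻¹
          * ((fun t => t ^ 2 * Real.exp (-(2 * (v:ℝ))⁻¹ * t ^ 2)) |x|) := by
    funext x
    simp only [sq_abs]
    rw [gaussianPDFReal_zero_eq]
    ring
  rw [hpt, integral_const_mul,
    integral_comp_abs (f := fun t => t ^ 2 * Real.exp (-(2 * (v:ℝ))⁻¹ * t ^ 2))]
  have hIoi : ∫ x in Set.Ioi (0:ℝ), x ^ 2 * Real.exp (-(2 * (v:ℝ))⁻¹ * x ^ 2)
      = ((2 * (v:ℝ))⁻¹) ^ (-(3:ℝ)/2) * (1/2) * Real.Gamma (3/2) := by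
    have := integral_rpow_mul_exp_neg_mul_rpow (p := 2) (q := 2) (b := (2 * (v:ℝ))⁻¹)
      (by norm_num) (by norm_num) hb
    rw [show (-((2:ℝ)+1)/2) = -(3:ℝ)/2 from by norm_num,
      show ((2:ℝ)+1)/2 = (3:ℝ)/2 from by norm_num] at this
    rw [← this]
    refine setIntegral_congr_fun measurableSet_Ioi (fun x hx => ?_)
    rw [rpow_two_eq]
  rw [hIoi]
  -- now pure real arithmetic
  have hΓ : Real.Gamma (3/2) = Real.sqrt Real.pi / 2 := by
    rw [show (3:ℝ)/2 = 1/2 + 1 from by norm_num, Real.Gamma_add_one (by norm_num),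
      Real.Gamma_one_half_eq]
    ring
  have hbpow : ((2 * (v:ℝ))⁻¹) ^ (-(3:ℝ)/2)
      = 2 * (v:ℝ) * Real.sqrt (2 * (v:ℝ)) := by
    rw [← Real.rpow_neg_one (2 * (v:ℝ)),
      ← Real.rpow_mul (by positivity : (0:ℝ) ≤ 2 * (v:ℝ)),
      show (-1 : ℝ) * (-(3:ℝ)/2) = 1 + 1/2 from by norm_num,
      Real.rpow_add (by positivity : (0:ℝ) < 2 * (v:ℝ)), Real.rpow_one,
      ← Real.sqrt_eq_rpow]
  rw [hΓ, hbpow]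
  have hsplit : Real.sqrt (2 * Real.pi * (v:ℝ)) = Real.sqrt Real.pi * Real.sqrt (2 * (v:ℝ)) := by
    rw [show 2 * Real.pi * (v:ℝ) = Real.pi * (2 * (v:ℝ)) from by ring,
      Real.sqrt_mul Real.pi_pos.le]
  have hsπ : (0:ℝ) < Real.sqrt Real.pi := Real.sqrt_pos.mpr Real.pi_pos
  have hs2v : (0:ℝ) < Real.sqrt (2 * (v:ℝ)) := Real.sqrt_pos.mpr (by positivity)
  rw [hsplit]
  field_simp

end ProbabilityTheory

open MeasureTheory ProbabilityTheory NNReal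

/-- bias of the single-imputation variance estimator under posterior-draw
imputation; it is unbiased iff ν_prior = 2. -/
theorem stmt8
    {Ω : Type*} [MeasurableSpace Ω] (P : Measure Ω) [IsProbabilityMeasure P]
    (μ σ : ℝ) (hσ : 0 < σ)
    (n_obs n_mis : ℕ) (hnobs : 2 ≤ n_obs) (hnmis : 2 ≤ n_mis)
    (ν_prior : ℝ) (hνPD : 0 < (n_obs : ℝ) - 1 + ν_prior)
    (U_obs Z_obs U_PD Z_PD Z_imp U_imp : Ω → ℝ)
    (hUmeas : Measurable U_obs) (hZmeas : Measurable Z_obs)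
    (hUPDmeas : Measurable U_PD) (hZPDmeas : Measurable Z_PD)
    (hZimpmeas : Measurable Z_imp) (hUimpmeas : Measurable U_imp)
    (hU : P.map U_obs = gammaMeasure (((n_obs : ℝ) - 1) / 2) (1 / 2))
    (hZ : P.map Z_obs = gaussianReal 0 (1 / (n_obs : ℝ≥0)))
    (hUPD : P.map U_PD = gammaMeasure (((n_obs : ℝ) - 1 + ν_prior) / 2) (1 / 2))
    (hZPD : P.map Z_PD = gaussianReal 0 (1 / (n_obs : ℝ≥0)))
    (hZimp : P.map Z_imp = gaussianReal 0 (1 / (n_mis : ℝ≥0)))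
    (hUimp : P.map U_imp = gammaMeasure (((n_mis : ℝ) - 1) / 2) (1 / 2))
    (hindep : iIndepFun
      ![U_obs, Z_obs, U_PD, Z_PD, Z_imp, U_imp] P) :
    (n_obs : ℝ) - 1 + ν_prior > 2 →
      ((∫ ω, σ ^ 2 * (U_obs ω / (((n_obs : ℝ) + (n_mis : ℝ)) - 1))
          * (1 + (U_imp ω + ((n_mis : ℝ) * (n_obs : ℝ) / ((n_obs : ℝ) + (n_mis : ℝ)))
              * (Z_imp ω + Z_PD ω) ^ 2) / U_PD ω) ∂P) - σ ^ 2
        = -σ ^ 2 * ((n_mis : ℝ) * (ν_prior - 2))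
            / ((((n_obs : ℝ) + (n_mis : ℝ)) - 1) * ((n_obs : ℝ) + ν_prior - 3)))
      ∧ ((∫ ω, σ ^ 2 * (U_obs ω / (((n_obs : ℝ) + (n_mis : ℝ)) - 1))
          * (1 + (U_imp ω + ((n_mis : ℝ) * (n_obs : ℝ) / ((n_obs : ℝ) + (n_mis : ℝ)))
              * (Z_imp ω + Z_PD ω) ^ 2) / U_PD ω) ∂P) = σ ^ 2 ↔ ν_prior = 2) := by
  intro hgt2
  -- abbreviations
  set o : ℝ := (n_obs : ℝ) with ho_def
  set m : ℝ := (n_mis : ℝ) with hm_def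
  have ho2 : (2:ℝ) ≤ o := by rw [ho_def]; exact_mod_cast hnobs
  have hm2 : (2:ℝ) ≤ m := by rw [hm_def]; exact_mod_cast hnmis
  have ho0 : (0:ℝ) < o := by linarith
  have hm0 : (0:ℝ) < m := by linarith
  have hN1 : (0:ℝ) < o + m - 1 := by linarith
  set c : ℝ := m * o / (o + m) with hc_def
  set νPD : ℝ := o - 1 + ν_prior with hν_def
  set G : Ω → ℝ := fun ω => U_imp ω + c * (Z_imp ω + Z_PD ω) ^ 2 with hG_def
  set V : Ω → ℝ := fun ω => (U_PD ω)⁻¹ with hV_def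
  set W : Ω → ℝ := fun ω => G ω * V ω with hW_def
  have hGmeas : Measurable G := by
    apply Measurable.add hUimpmeas
    exact (((hZimpmeas.add hZPDmeas).pow_const 2).const_mul c)
  have hVmeas : Measurable V := hUPDmeas.inv
  have hWmeas : Measurable W := hGmeas.mul hVmeas
  have hfmeas : ∀ i, Measurable (![U_obs, Z_obs, U_PD, Z_PD, Z_imp, U_imp] i) := by
    intro i; fin_cases i <;> assumption
  -- nonzero variances
  have hvo : (1 / (n_obs : ℝ≥0)) ≠ 0 := by
    simp only [ne_eq, one_div, inv_eq_zero, Nat.cast_eq_zero]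
    omega
  have hvm : (1 / (n_mis : ℝ≥0)) ≠ 0 := by
    simp only [ne_eq, one_div, inv_eq_zero, Nat.cast_eq_zero]
    omega
  have hvo_coe : ((1 / (n_obs : ℝ≥0) : ℝ≥0) : ℝ) = 1 / o := by push_cast; rfl
  have hvm_coe : ((1 / (n_mis : ℝ≥0) : ℝ≥0) : ℝ) = 1 / m := by push_cast; rfl
  -- integrability of marginals
  have iUobs : Integrable U_obs P := by
    have h := integrable_id_gammaMeasure (a := (o - 1)/2) (r := 1/2)
      (by linarith) (by norm_num)
    rw [← hU] at h
    exact (integrable_map_measure aestronglyMeasurable_id hUmeas.aemeasurable).mp h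
  have iUimp : Integrable U_imp P := by
    have h := integrable_id_gammaMeasure (a := (m - 1)/2) (r := 1/2)
      (by linarith) (by norm_num)
    rw [← hUimp] at h
    exact (integrable_map_measure aestronglyMeasurable_id hUimpmeas.aemeasurable).mp h
  have iV : Integrable V P := by
    have h := integrable_inv_gammaMeasure (a := νPD/2) (r := 1/2)
      (by rw [hν_def]; linarith) (by norm_num)
    rw [← hUPD] at h
    exact (integrable_map_measure measurable_inv.aestronglyMeasurable
      hUPDmeas.aemeasurable).mp h
  have iZimp : Integrable Z_imp P := by
    have h := integrable_id_gaussianReal hvm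
    rw [← hZimp] at h
    exact (integrable_map_measure aestronglyMeasurable_id hZimpmeas.aemeasurable).mp h
  have iZPD : Integrable Z_PD P := by
    have h := integrable_id_gaussianReal hvo
    rw [← hZPD] at h
    exact (integrable_map_measure aestronglyMeasurable_id hZPDmeas.aemeasurable).mp h
  have iZimpSq : Integrable (fun ω => Z_imp ω ^ 2) P := by
    have h := integrable_sq_gaussianReal hvm
    rw [← hZimp] at h
    exact (integrable_map_measure (by fun_prop) hZimpmeas.aemeasurable).mp h
  have iZPDSq : Integrable (fun ω => Z_PD ω ^ 2) P := by
    have h := integrable_sq_gaussianReal hvo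
    rw [← hZPD] at h
    exact (integrable_map_measure (by fun_prop) hZPDmeas.aemeasurable).mp h
  -- independence facts
  have hIndepCross : IndepFun Z_imp Z_PD P := by
    have h := hindep.indepFun (show (4 : Fin 6) ≠ 3 by decide)
    simpa using h
  have iCross : Integrable (fun ω => Z_imp ω * Z_PD ω) P :=
    hIndepCross.integrable_mul iZimp iZPD
  have iY : Integrable (fun ω => (Z_imp ω + Z_PD ω) ^ 2) P := by
    have h : (fun ω => (Z_imp ω + Z_PD ω) ^ 2)
        = fun ω => (Z_imp ω ^ 2 + Z_PD ω ^ 2) + 2 * (Z_imp ω * Z_PD ω) := by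
      funext ω; ring
    rw [h]
    have i1 : Integrable (fun ω => Z_imp ω ^ 2 + Z_PD ω ^ 2) P := iZimpSq.add iZPDSq
    have i2 : Integrable (fun ω => 2 * (Z_imp ω * Z_PD ω)) P := iCross.const_mul 2
    exact i1.add i2
  have iG : Integrable G P := iUimp.add (iY.const_mul c)
  have hIndepGV : IndepFun G V P := by
    rw [hG_def, hV_def]
    have h := hindep.indepFun_finset {3, 4, 5} {2} (by decide) hfmeas
    have hφ : Measurable (fun v : (i : ({3, 4, 5} : Finset (Fin 6))) → ℝ =>
        v ⟨5, by decide⟩ + c * (v ⟨4, by decide⟩ + v ⟨3, by decide⟩) ^ 2) :=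
      by fun_prop
    have hψ : Measurable (fun v : (i : ({2} : Finset (Fin 6))) → ℝ =>
        (v ⟨2, by decide⟩)⁻¹) := (measurable_pi_apply _).inv
    exact h.comp hφ hψ
  have iW : Integrable W P := hIndepGV.integrable_mul iG iV
  have hIndepUW : IndepFun U_obs W P := by
    rw [hW_def, hG_def, hV_def]
    have h := hindep.indepFun_finset {0} {2, 3, 4, 5} (by decide) hfmeas
    have hφ : Measurable (fun v : (i : ({0} : Finset (Fin 6))) → ℝ =>
        v ⟨0, by decide⟩) := measurable_pi_apply _
    have hψ : Measurable (fun v : (i : ({2, 3, 4, 5} : Finset (Fin 6))) → ℝ =>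
        (v ⟨5, by decide⟩ + c * (v ⟨4, by decide⟩ + v ⟨3, by decide⟩) ^ 2)
          * (v ⟨2, by decide⟩)⁻¹) :=
      by fun_prop
    exact h.comp hφ hψ
  have iUW : Integrable (fun ω => U_obs ω * W ω) P := hIndepUW.integrable_mul iUobs iW
  -- marginal moment values
  have EUobs : ∫ ω, U_obs ω ∂P = o - 1 := by
    have h : ∫ ω, U_obs ω ∂P = ∫ x, x ∂(P.map U_obs) :=
      (integral_map (f := fun x : ℝ => x) hUmeas.aemeasurable aestronglyMeasurable_id).symm
    rw [h, hU, integral_id_gammaMeasure (by linarith) (by norm_num)]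
    field_simp
  have EUimp : ∫ ω, U_imp ω ∂P = m - 1 := by
    have h : ∫ ω, U_imp ω ∂P = ∫ x, x ∂(P.map U_imp) :=
      (integral_map (f := fun x : ℝ => x) hUimpmeas.aemeasurable aestronglyMeasurable_id).symm
    rw [h, hUimp, integral_id_gammaMeasure (by linarith) (by norm_num)]
    field_simp
  have EV : ∫ ω, V ω ∂P = 1 / (νPD - 2) := by
    have h : ∫ ω, V ω ∂P = ∫ x, x⁻¹ ∂(P.map U_PD) :=
      (integral_map (f := fun x : ℝ => x⁻¹) hUPDmeas.aemeasurable
        measurable_inv.aestronglyMeasurable).symm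
    rw [h, hUPD, integral_inv_gammaMeasure (by rw [hν_def]; linarith) (by norm_num)]
    rw [hν_def]
    rw [div_eq_div_iff (by linarith) (by linarith)]
    ring
  have EZimp : ∫ ω, Z_imp ω ∂P = 0 := by
    have h : ∫ ω, Z_imp ω ∂P = ∫ x, x ∂(P.map Z_imp) :=
      (integral_map (f := fun x : ℝ => x) hZimpmeas.aemeasurable aestronglyMeasurable_id).symm
    rw [h, hZimp, integral_id_gaussianReal]
  have EZPD : ∫ ω, Z_PD ω ∂P = 0 := by
    have h : ∫ ω, Z_PD ω ∂P = ∫ x, x ∂(P.map Z_PD) :=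
      (integral_map (f := fun x : ℝ => x) hZPDmeas.aemeasurable aestronglyMeasurable_id).symm
    rw [h, hZPD, integral_id_gaussianReal]
  have EZimpSq : ∫ ω, Z_imp ω ^ 2 ∂P = 1 / m := by
    have h : ∫ ω, Z_imp ω ^ 2 ∂P = ∫ x, x ^ 2 ∂(P.map Z_imp) :=
      (integral_map (f := fun x : ℝ => x ^ 2) hZimpmeas.aemeasurable (by fun_prop)).symm
    rw [h, hZimp, integral_sq_gaussianReal hvm, hvm_coe]
  have EZPDSq : ∫ ω, Z_PD ω ^ 2 ∂P = 1 / o := by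
    have h : ∫ ω, Z_PD ω ^ 2 ∂P = ∫ x, x ^ 2 ∂(P.map Z_PD) :=
      (integral_map (f := fun x : ℝ => x ^ 2) hZPDmeas.aemeasurable (by fun_prop)).symm
    rw [h, hZPD, integral_sq_gaussianReal hvo, hvo_coe]
  -- expectation of Y
  have ECross : ∫ ω, Z_imp ω * Z_PD ω ∂P = 0 := by
    rw [hIndepCross.integral_fun_mul_eq_mul_integral iZimp.aestronglyMeasurable iZPD.aestronglyMeasurable,
      EZimp, EZPD]
    ring
  have EY : ∫ ω, (Z_imp ω + Z_PD ω) ^ 2 ∂P = 1 / m + 1 / o := by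
    have h : (fun ω => (Z_imp ω + Z_PD ω) ^ 2)
        = fun ω => (Z_imp ω ^ 2 + Z_PD ω ^ 2) + 2 * (Z_imp ω * Z_PD ω) := by
      funext ω; ring
    have i1 : Integrable (fun ω => Z_imp ω ^ 2 + Z_PD ω ^ 2) P := iZimpSq.add iZPDSq
    have i2 : Integrable (fun ω => 2 * (Z_imp ω * Z_PD ω)) P := iCross.const_mul 2
    rw [h, integral_add i1 i2, integral_add iZimpSq iZPDSq, integral_const_mul,
      ECross, EZimpSq, EZPDSq]
    ring
  have EG : ∫ ω, G ω ∂P = m := by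
    rw [hG_def]
    simp only
    have i2 : Integrable (fun ω => c * (Z_imp ω + Z_PD ω) ^ 2) P := iY.const_mul c
    rw [integral_add iUimp i2, integral_const_mul, EUimp, EY, hc_def]
    field_simp
    ring
  have EW : ∫ ω, W ω ∂P = m / (νPD - 2) := by
    rw [hW_def]
    simp only
    rw [hIndepGV.integral_fun_mul_eq_mul_integral iG.aestronglyMeasurable iV.aestronglyMeasurable, EG, EV]
    ring
  have EUW : ∫ ω, U_obs ω * W ω ∂P = (o - 1) * (m / (νPD - 2)) := by
    rw [hIndepUW.integral_fun_mul_eq_mul_integral iUobs.aestronglyMeasurable iW.aestronglyMeasurable,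
      EUobs, EW]
  -- total expectation
  have hνPD2 : νPD - 2 ≠ 0 := by rw [hν_def]; intro h; rw [hν_def] at hgt2; linarith
  have hMain : (∫ ω, σ ^ 2 * (U_obs ω / ((o + m) - 1))
          * (1 + (U_imp ω + c * (Z_imp ω + Z_PD ω) ^ 2) / U_PD ω) ∂P)
      = σ ^ 2 / (o + m - 1) * ((o - 1) + (o - 1) * (m / (νPD - 2))) := by
    have hfun : (fun ω => σ ^ 2 * (U_obs ω / ((o + m) - 1))
          * (1 + (U_imp ω + c * (Z_imp ω + Z_PD ω) ^ 2) / U_PD ω))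
        = fun ω => σ ^ 2 / (o + m - 1) * (U_obs ω + U_obs ω * W ω) := by
      funext ω
      rw [hW_def]
      simp only
      rw [hV_def, hG_def]
      simp only
      rw [div_eq_mul_inv (U_imp ω + c * (Z_imp ω + Z_PD ω) ^ 2)]
      ring
    rw [hfun, integral_const_mul, integral_add iUobs iUW, EUobs, EUW]
  have hd1 : o + m - 1 ≠ 0 := ne_of_gt hN1
  have hd2 : o + ν_prior - 3 ≠ 0 := by
    intro h
    rw [hν_def] at hgt2
    linarith
  have hνPD2' : o - 1 + ν_prior - 2 ≠ 0 := by rw [hν_def] at hνPD2; exact hνPD2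
  have key : (∫ ω, σ ^ 2 * (U_obs ω / ((o + m) - 1))
          * (1 + (U_imp ω + c * (Z_imp ω + Z_PD ω) ^ 2) / U_PD ω) ∂P) - σ ^ 2
        = -σ ^ 2 * (m * (ν_prior - 2)) / ((o + m - 1) * (o + ν_prior - 3)) := by
    rw [hMain, hν_def]
    field_simp
    ring
  refine ⟨by rw [show (o + m) - 1 = o + m - 1 from rfl] at key; exact key, ?_⟩
  constructor
  · intro hE
    have h0 : -σ ^ 2 * (m * (ν_prior - 2)) / ((o + m - 1) * (o + ν_prior - 3)) = 0 := by
      rw [← key, hE]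
      ring
    have h1 : -σ ^ 2 * (m * (ν_prior - 2)) = 0 := by
      rcases div_eq_zero_iff.mp h0 with h | h
      · exact h
      · exact absurd h (mul_ne_zero hd1 hd2)
    have hσ2 : σ ^ 2 ≠ 0 := by positivity
    have h2 : m * (ν_prior - 2) = 0 := by
      rcases mul_eq_zero.mp h1 with h | h
      · exact absurd (neg_eq_zero.mp h) hσ2
      · exact h
    rcases mul_eq_zero.mp h2 with h | h
    · exact absurd h (by positivity)
    · linarith
  · intro h2'
    rw [hMain, hν_def, h2']
    have ho1 : o - 1 ≠ 0 := by intro h; linarith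
    rw [show o - 1 + 2 - 2 = o - 1 by ring]
    field_simp
    ring
end
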